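/- Let X be a non-empty perfect Polish space, n ∈ ℕ, and let π be a balanced scheme of size n. Then there exist balanced schemes π_j (j ∈ ℕ) of size n+1, each consistent with π, such that the open sets U(π_j) are pairwise disjoint and ⋃_{j} U(π_j) is dense in U(π). -/

import Mathlib

open Filter Set TopologicalSpace
open scoped Classical

/-- `ValidIdx a l`: the list `l` is a valid index tuple, i.e. its `k`-th entry lies in
`{0, …, a k − 1}` (representing `{1, …, a_{k+1}}` in the paper, zero-indexed). -/
def ValidIdx (a : ℕ → ℕ) (l : List ℕ) : Prop :=
  ∀ k (hk : k < l.length), l.get ⟨k, hk⟩ < a k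

/-- The distance `dist(A, B) = inf { d(x,y) : x ∈ A, y ∈ B }` of two sets. -/
noncomputable def SetDist {X : Type*} [MetricSpace X] (A B : Set X) : ℝ :=
  sInf (Set.image2 dist A B)

/-- The index function `Φ_{a}` determined by the fixed surjection `Ψ` (where `Ψ m` stands
for the value of `Ψ` at the odd number `2m+1`): `Φ(2m+1) = Ψ(2m+1)` if it is a non-empty
valid index tuple of level at most `2m+1`, and the tuple `(1) ∈ I₁` (here `[0]`,
zero-indexed) otherwise. -/
noncomputable def PhiIdx (Ψ : ℕ → List ℕ) (a : ℕ → ℕ) (m : ℕ) : List ℕ :=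
  if 1 ≤ (Ψ m).length ∧ (Ψ m).length ≤ 2 * m + 1 ∧ ValidIdx a (Ψ m) then Ψ m else [0]

/-- A balanced scheme of size `n` (size `0` is the empty scheme): branching numbers `a`
(meaningful for `k < 2n`), non-empty open sets `U l` for valid tuples `l` of level
`1 ≤ l.length ≤ 2n`, and constants `b` witnessing conditions (1)–(5) of the definition of
balanced schemes; condition (5) is governed by the index function `PhiIdx Ψ a`. -/
def IsBalancedScheme {X : Type*} [MetricSpace X] (Ψ : ℕ → List ℕ) (n : ℕ)
    (a : ℕ → ℕ) (U : List ℕ → Set X) (b : ℕ → ℝ) : Prop :=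
  (∀ k, k < 2 * n → 1 ≤ a k) ∧
  (1 ≤ n → 2 ≤ a 0) ∧
  (∀ k, 1 ≤ k → k < 2 * n → k * ∏ i ∈ Finset.range k, a i ≤ a k) ∧
  (∀ l, ValidIdx a l → 1 ≤ l.length → l.length ≤ 2 * n → (U l).Nonempty ∧ IsOpen (U l)) ∧
  (∀ l x, ValidIdx a (l ++ [x]) → 1 ≤ l.length → l.length + 1 ≤ 2 * n →
    closure (U (l ++ [x])) ⊆ U l) ∧
  (∀ k, 1 ≤ k → k ≤ 2 * n → 0 < b k) ∧
  (∀ l, ValidIdx a l → 1 ≤ l.length → l.length ≤ 2 * n → Metric.diam (U l) ≤ b l.length) ∧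
  (∀ l l', ValidIdx a l → ValidIdx a l' → 1 ≤ l.length → l.length = l'.length →
    l.length ≤ 2 * n → l ≠ l' → 2 * b l.length < SetDist (U l) (U l')) ∧
  (∀ m i j, 2 * m + 1 < 2 * n → ValidIdx a i → ValidIdx a j →
    i.length = 2 * m + 1 → j.length = 2 * m + 1 →
    U i ⊆ U (PhiIdx Ψ a m) → ¬ U j ⊆ U (PhiIdx Ψ a m) →
    ∀ s t, s < a (2 * m + 1) → t < a (2 * m + 1) → s ≠ t →
      Metric.diam (⋃ u ∈ Finset.range (a (2 * m + 1)), U (j ++ [u])) <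
        SetDist (U (i ++ [s])) (U (i ++ [t]))) 

/-- The open subset `𝒰(π) ⊆ K(X)` associated to a balanced scheme of size `n`: the
non-empty compact sets covered by the level-`2n` sets and meeting each of them.
For `n = 0` it is all of `K(X)`. -/
def SchemeSet {X : Type*} [MetricSpace X] (a : ℕ → ℕ) (U : List ℕ → Set X) (n : ℕ) :
    Set (NonemptyCompacts X) :=
  if n = 0 then Set.univ else
    {K | (K : Set X) ⊆ (⋃ l ∈ {l : List ℕ | ValidIdx a l ∧ l.length = 2 * n}, U l) ∧
      ∀ l, ValidIdx a l → l.length = 2 * n → ((K : Set X) ∩ U l).Nonempty}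

/-- A scheme of size `n + 1` with data `(a', U')` is consistent with a scheme of size `n`
with data `(a, U)` if the data agree on all levels `k ≤ 2n`. -/
def SchemeConsistent {X : Type*} [MetricSpace X] (n : ℕ) (a a' : ℕ → ℕ)
    (U U' : List ℕ → Set X) : Prop :=
  (∀ k, k < 2 * n → a' k = a k) ∧
    ∀ l : List ℕ, ValidIdx a l → 1 ≤ l.length → l.length ≤ 2 * n → U' l = U l


namespace BSD
open Metric


lemma validIdx_nil {a : ℕ → ℕ} : ValidIdx a [] := by
  intro k hk; simp at hk

lemma validIdx_concat {a : ℕ → ℕ} {l : List ℕ} {x : ℕ} :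
    ValidIdx a (l ++ [x]) ↔ ValidIdx a l ∧ x < a l.length := by
  constructor
  · intro h
    constructor
    · intro k hk
      have hk' : k < (l ++ [x]).length := by simp; omega
      have := h k hk'
      simpa [List.get_eq_getElem, List.getElem_append_left hk] using this
    · have hk' : l.length < (l ++ [x]).length := by simp
      have := h l.length hk'
      simpa [List.get_eq_getElem, List.getElem_append_right (le_refl l.length)] using this
  · rintro ⟨h1, h2⟩ k hk
    have hk2 : k < l.length + 1 := by simpa using hk
    rcases lt_or_ge k l.length with h | h
    · simpa [List.get_eq_getElem, List.getElem_append_left h] using h1 k h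
    · have hkl : k = l.length := by omega
      subst hkl
      simpa [List.get_eq_getElem, List.getElem_append_right (le_refl l.length)] using h2

lemma validIdx_take {a : ℕ → ℕ} {l : List ℕ} (h : ValidIdx a l) (m : ℕ) :
    ValidIdx a (l.take m) := by
  intro k hk
  have hk' : k < l.length := lt_of_lt_of_le hk (by simpa using List.length_take_le m l)
  have := h k hk'
  simpa [List.get_eq_getElem, List.getElem_take] using this

lemma validIdx_congr {a a' : ℕ → ℕ} {l : List ℕ} (hc : ∀ k, k < l.length → a k = a' k)
    (h : ValidIdx a l) : ValidIdx a' l := by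
  intro k hk
  rw [← hc k hk]; exact h k hk

lemma validIdx_replicate {a : ℕ → ℕ} {m : ℕ} (h : ∀ k, k < m → 1 ≤ a k) :
    ValidIdx a (List.replicate m 0) := by
  intro k hk
  have hk' : k < m := by simpa using hk
  have := h k hk'
  simp [List.get_eq_getElem, List.getElem_replicate]
  omega

lemma validIdx_append_replicate {a : ℕ → ℕ} {l : List ℕ} (h : ValidIdx a l) (m : ℕ)
    (ha : ∀ k, l.length ≤ k → k < l.length + m → 1 ≤ a k) :
    ValidIdx a (l ++ List.replicate m 0) := by
  induction m with
  | zero => simpa using h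
  | succ m ih =>
    have : l ++ List.replicate (m+1) 0 = (l ++ List.replicate m 0) ++ [0] := by
      simp [List.replicate_succ']
    rw [this, validIdx_concat]
    refine ⟨ih (fun k hk hk2 => ha k hk (by omega)), ?_⟩
    have := ha (l.length + m) (by omega) (by omega)
    simpa [Nat.one_le_iff_ne_zero, Nat.pos_iff_ne_zero] using this

/-- decomposition of a list of length m+1 -/
lemma eq_take_concat {l : List ℕ} {m : ℕ} (hl : l.length = m + 1) :
    l = l.take m ++ [l.get ⟨m, by omega⟩] := by
  have h1 : l.take (m+1) = l := by
    rw [List.take_of_length_le (by omega)]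
  conv_lhs => rw [← h1]
  rw [List.take_succ]
  congr 1
  have : l[m]? = some l[m] := List.getElem?_eq_getElem (by omega)
  simp [this, List.get_eq_getElem]

lemma vlen_finite (a : ℕ → ℕ) (m : ℕ) : {l : List ℕ | ValidIdx a l ∧ l.length = m}.Finite := by
  induction m with
  | zero =>
    apply Set.Finite.subset (Set.finite_singleton ([] : List ℕ))
    rintro l ⟨-, hl⟩
    simp [List.length_eq_zero_iff.mp hl]
  | succ m ih =>
    apply Set.Finite.subset (Set.Finite.image2 (fun l x => l ++ [x]) ih (Set.finite_Iio (a m)))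
    rintro l ⟨hv, hl⟩
    refine ⟨l.take m, ⟨validIdx_take hv m, by simp [hl]⟩, l.get ⟨m, by omega⟩, ?_, ?_⟩
    · simpa [Set.mem_Iio] using hv m (by omega)
    · exact (eq_take_concat hl).symm

lemma vlen_nonempty {a : ℕ → ℕ} {m : ℕ} (h : ∀ k, k < m → 1 ≤ a k) :
    ∃ l, ValidIdx a l ∧ l.length = m :=
  ⟨List.replicate m 0, validIdx_replicate h, by simp⟩

section SD
variable {X : Type*} [MetricSpace X]

lemma setDist_le_dist {A B : Set X} {x y : X} (hx : x ∈ A) (hy : y ∈ B) :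
    SetDist A B ≤ dist x y := by
  apply csInf_le
  · exact ⟨0, by rintro d ⟨u, -, v, -, rfl⟩; exact dist_nonneg⟩
  · exact ⟨x, hx, y, hy, rfl⟩

lemma le_setDist {A B : Set X} {c : ℝ} (hA : A.Nonempty) (hB : B.Nonempty)
    (h : ∀ x ∈ A, ∀ y ∈ B, c ≤ dist x y) : c ≤ SetDist A B := by
  apply le_csInf
  · obtain ⟨x, hx⟩ := hA; obtain ⟨y, hy⟩ := hB
    exact ⟨dist x y, x, hx, y, hy, rfl⟩
  · rintro d ⟨u, hu, v, hv, rfl⟩; exact h u hu v hv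

lemma disjoint_of_setDist_pos {A B : Set X} (h : 0 < SetDist A B) : Disjoint A B := by
  rw [Set.disjoint_left]
  intro x hxA hxB
  have := setDist_le_dist (A := A) (B := B) hxA hxB
  rw [dist_self] at this
  linarith

end SD



section Perf
variable {X : Type*} [MetricSpace X] [CompleteSpace X]

lemma open_not_countable (hperf : ∀ x : X, (nhdsWithin x {x}ᶜ).NeBot)
    {V : Set X} (hV : IsOpen V) (hne : V.Nonempty) : ¬ V.Countable := by
  intro hcnt
  obtain ⟨x, hx⟩ := hne
  obtain ⟨δ, hδ, hball⟩ := Metric.isOpen_iff.mp hV x hx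
  set C := closure (ball x (δ/2)) with hC
  have hCV : C ⊆ V := by
    apply Subset.trans (closure_ball_subset_closedBall)
    intro z hz
    apply hball
    simp only [mem_closedBall, mem_ball] at *
    linarith
  have hCne : C.Nonempty := (Metric.nonempty_ball.mpr (by linarith)).closure
  have hCperf : Perfect C := by
    refine ⟨isClosed_closure, ?_⟩
    rw [preperfect_iff_nhds]
    intro y hy U hU
    rcases mem_closure_iff_nhds.mp hy U hU with ⟨v, hvU, hvb⟩
    by_cases hvy : v = y
    · -- y itself lies in the open ball; use perfectness of X at y
      subst hvy
      have hUb : U ∩ ball x (δ/2) ∈ nhds v :=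
        Filter.inter_mem hU (Metric.isOpen_ball.mem_nhds hvb)
      haveI := hperf v
      have : (U ∩ ball x (δ/2)) ∩ {v}ᶜ ∈ nhdsWithin v {v}ᶜ :=
        Filter.inter_mem (mem_nhdsWithin_of_mem_nhds hUb) self_mem_nhdsWithin
      obtain ⟨z, ⟨hz1, hz2⟩, hz3⟩ := Filter.nonempty_of_mem this
      exact ⟨z, ⟨hz1, subset_closure hz2⟩, hz3⟩
    · exact ⟨v, ⟨hvU, subset_closure hvb⟩, hvy⟩
  obtain ⟨f, hfr, -, hfi⟩ := hCperf.exists_nat_bool_injection hCne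
  have : (Set.univ : Set (ℕ → Bool)).Countable := by
    have h1 : (Set.range f).Countable := hcnt.mono (hfr.trans hCV)
    have := h1.preimage hfi
    simpa using this
  rw [Set.countable_univ_iff] at this
  obtain ⟨g, hg⟩ := exists_surjective_nat (ℕ → Bool)
  obtain ⟨m, hm⟩ := hg (fun k => ! g k k)
  have := congrFun hm m
  simp at this

lemma exists_mem_open_avoid (hperf : ∀ x : X, (nhdsWithin x {x}ᶜ).NeBot)
    {V : Set X} (hV : IsOpen V) (hne : V.Nonempty) {Z : Set X} (hZ : Z.Countable) :
    ∃ x, x ∈ V ∧ x ∉ Z := by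
  by_contra h
  push_neg at h
  exact open_not_countable hperf hV hne (hZ.mono h)

lemma finset_choice_inj [Nonempty X] (hperf : ∀ x : X, (nhdsWithin x {x}ᶜ).NeBot)
    {ι : Type*} (s : Finset ι) (V : ι → Set X)
    (hV : ∀ i ∈ s, IsOpen (V i) ∧ (V i).Nonempty) {Z : Set X} (hZ : Z.Countable) :
    ∃ f : ι → X, Set.InjOn f ↑s ∧ ∀ i ∈ s, f i ∈ V i ∧ f i ∉ Z := by
  classical
  induction s using Finset.induction_on with
  | empty => exact ⟨fun _ => Classical.arbitrary X, by simp, by simp⟩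
  | @insert a s ha ih =>
    obtain ⟨f, hfi, hfm⟩ := ih (fun i hi => hV i (Finset.mem_insert_of_mem hi))
    obtain ⟨hVo, hVn⟩ := hV a (Finset.mem_insert_self a s)
    obtain ⟨y, hy, hyz⟩ := exists_mem_open_avoid hperf hVo hVn
      (hZ.union ((s.image f).countable_toSet))
    refine ⟨Function.update f a y, ?_, ?_⟩
    · intro i hi j hj hij
      simp only [Finset.coe_insert, Set.mem_insert_iff, Finset.mem_coe] at hi hj
      rcases hi with rfl | hi <;> rcases hj with rfl | hj
      · rfl
      · exfalso
        rw [Function.update_self, Function.update_of_ne (by rintro rfl; exact ha hj)] at hij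
        exact hyz (Or.inr (by simp [hij]; exact ⟨j, hj, rfl⟩))
      · exfalso
        rw [Function.update_self, Function.update_of_ne (by rintro rfl; exact ha hi)] at hij
        exact hyz (Or.inr (by simp [← hij]; exact ⟨i, hi, rfl⟩))
      · rw [Function.update_of_ne (by rintro rfl; exact ha hi),
          Function.update_of_ne (by rintro rfl; exact ha hj)] at hij
        exact hfi hi hj hij
    · intro i hi
      rcases Finset.mem_insert.mp hi with rfl | hi2
      · rw [Function.update_self]
        exact ⟨hy, fun hc => hyz (Or.inl hc)⟩
      · rw [Function.update_of_ne (by rintro rfl; exact ha hi2)]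
        exact hfm i hi2

end Perf

lemma exists_pos_avoid {bad : Set ℝ} (hbad : bad.Countable) {m : ℝ} (hm : 0 < m) :
    ∃ r : ℝ, 0 < r ∧ r < m ∧ r ∉ bad := by
  by_contra h
  push_neg at h
  have hsub : Set.Ioo (0:ℝ) m ⊆ bad := fun r hr => h r hr.1 hr.2
  have hcnt : (Set.Ioo (0:ℝ) m).Countable := hbad.mono hsub
  have h1 : (Cardinal.mk (Set.Ioo (0:ℝ) m)) ≤ Cardinal.aleph0 := by
    rw [Cardinal.mk_le_aleph0_iff]
    exact hcnt.to_subtype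
  rw [Cardinal.mk_Ioo_real hm] at h1
  exact absurd h1 (not_le.mpr Cardinal.aleph0_lt_continuum)


section Scheme
variable {X : Type*} [MetricSpace X] (Ψ : ℕ → List ℕ) (n : ℕ) (a : ℕ → ℕ)
  (U : List ℕ → Set X) (b : ℕ → ℝ)

lemma scheme_chain (hπ : IsBalancedScheme Ψ n a U b) :
    ∀ d l m, l.length = m + d → ValidIdx a l → 1 ≤ m → l.length ≤ 2*n →
      U l ⊆ U (l.take m) := by
  intro d
  induction d with
  | zero =>
    intro l m hlen _ _ _
    rw [List.take_of_length_le (by omega)]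
  | succ d ih =>
    intro l m hlen hval hm hlen2
    have hne : l ≠ [] := by
      intro h; rw [h] at hlen; simp at hlen
    have hdec := List.dropLast_append_getLast hne
    have hd : l.dropLast.length = m + d := by
      rw [List.length_dropLast]; omega
    have hvald : ValidIdx a l.dropLast := by
      rw [List.dropLast_eq_take]; exact validIdx_take hval _
    have step : U l ⊆ U l.dropLast := by
      have h5 := hπ.2.2.2.2.1 l.dropLast (l.getLast hne) (by rw [hdec]; exact hval)
        (by omega) (by rw [List.length_dropLast] at hd ⊢; omega)
      rw [hdec] at h5
      exact subset_closure.trans h5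
    have htake : l.dropLast.take m = l.take m := by
      rw [List.dropLast_eq_take, List.take_take]
      congr 1; omega
    calc U l ⊆ U l.dropLast := step
      _ ⊆ U (l.dropLast.take m) := ih l.dropLast m hd hvald hm (by omega)
      _ = U (l.take m) := by rw [htake]

variable (D' : Set X) (w0 : X)

structure Pack where
  a' : ℕ → ℕ
  U' : List ℕ → Set X
  b' : ℕ → ℝ
  C : Finset X
  r : ℝ
  scheme : IsBalancedScheme Ψ (n+1) a' U' b'
  consist : SchemeConsistent n a a' U U'
  rpos : 0 < r
  Cne : C.Nonempty
  ball_sub : ∀ l, ValidIdx a' l → l.length = 2*(n+1) → ∃ c ∈ C, U' l = Metric.ball c r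
  ball_sur : ∀ c ∈ C, ∃ l, ValidIdx a' l ∧ l.length = 2*(n+1) ∧ U' l = Metric.ball c r
  generic : ∀ x ∈ D', ∀ c ∈ C, dist x c ≠ r
  w0far : ∀ c ∈ C, r < dist c w0

variable {Ψ n a U b D' w0}

lemma mem_schemeSet_of_ne {a₀ : ℕ → ℕ} {U₀ : List ℕ → Set X} {m : ℕ} (hm : m ≠ 0)
    (K : NonemptyCompacts X) :
    K ∈ SchemeSet a₀ U₀ m ↔
      ((K : Set X) ⊆ ⋃ l ∈ {l : List ℕ | ValidIdx a₀ l ∧ l.length = 2 * m}, U₀ l) ∧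
      ∀ l, ValidIdx a₀ l → l.length = 2 * m → ((K : Set X) ∩ U₀ l).Nonempty := by
  rw [SchemeSet, if_neg hm]
  rfl

lemma pack_mem_iff (p : Pack Ψ n a U D' w0) (K : NonemptyCompacts X) :
    K ∈ SchemeSet p.a' p.U' (n+1) ↔
      ((K : Set X) ⊆ ⋃ c ∈ p.C, Metric.ball c p.r) ∧
      ∀ c ∈ p.C, ((K : Set X) ∩ Metric.ball c p.r).Nonempty := by
  rw [mem_schemeSet_of_ne (Nat.succ_ne_zero n)]
  constructor
  · rintro ⟨h1, h2⟩
    constructor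
    · intro x hx
      obtain ⟨l, hl, hxs⟩ := Set.mem_iUnion₂.mp (h1 hx)
      have hl' : ValidIdx p.a' l ∧ l.length = 2 * (n+1) := hl
      obtain ⟨c, hc, hcb⟩ := p.ball_sub _ hl'.1 hl'.2
      rw [hcb] at hxs
      exact Set.mem_iUnion₂.mpr ⟨c, hc, hxs⟩
    · intro c hc
      obtain ⟨l, hv, hlen, heq⟩ := p.ball_sur c hc
      rw [← heq]
      exact h2 l hv hlen
  · rintro ⟨h1, h2⟩
    constructor
    · intro x hx
      obtain ⟨c, hc, hxc⟩ := Set.mem_iUnion₂.mp (h1 hx)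
      obtain ⟨l, hv, hlen, heq⟩ := p.ball_sur c hc
      refine Set.mem_iUnion₂.mpr ⟨l, ⟨hv, hlen⟩, ?_⟩
      rw [heq]; exact hxc
    · intro l hv hlen
      obtain ⟨c, hc, heq⟩ := p.ball_sub l hv hlen
      rw [heq]
      exact h2 c hc

lemma pack_disjoint (p q : Pack Ψ n a U D' w0)
    (h : (∃ c ∈ p.C, ∀ c' ∈ q.C, q.r + p.r ≤ dist c c') ∨
         (∃ c' ∈ q.C, ∀ c ∈ p.C, q.r + p.r ≤ dist c' c)) :
    Disjoint (SchemeSet p.a' p.U' (n+1)) (SchemeSet q.a' q.U' (n+1)) := by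
  rw [Set.disjoint_left]
  intro K hKp hKq
  rw [pack_mem_iff] at hKp hKq
  rcases h with ⟨c, hc, hfar⟩ | ⟨c', hc', hfar⟩
  · obtain ⟨y, hyK, hyb⟩ := hKp.2 c hc
    obtain ⟨c', hc', hyc'⟩ := Set.mem_iUnion₂.mp (hKq.1 hyK)
    have h1 : dist c y < p.r := by simpa [Metric.mem_ball, dist_comm] using hyb
    have h2 : dist y c' < q.r := by simpa [Metric.mem_ball] using hyc'
    have := hfar c' hc'
    have htri := dist_triangle c y c'
    linarith
  · obtain ⟨y, hyK, hyb⟩ := hKq.2 c' hc'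
    obtain ⟨c, hc, hyc⟩ := Set.mem_iUnion₂.mp (hKp.1 hyK)
    have h1 : dist c' y < q.r := by simpa [Metric.mem_ball, dist_comm] using hyb
    have h2 : dist y c < p.r := by simpa [Metric.mem_ball] using hyc
    have := hfar c hc
    have htri := dist_triangle c' y c
    linarith

end Scheme

def Rtop {X : Type*} [MetricSpace X] (n : ℕ) (U : List ℕ → Set X) (l : List ℕ) : Set X :=
  if n = 0 then Set.univ else U l

section Margins
variable {X : Type*} [MetricSpace X]

lemma margins_exists (T : Finset X) (hTne : T.Nonempty) (F : Finset (Finset X × ℝ))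
    (hF : ∀ P ∈ F, P.1.Nonempty ∧
      ((∃ x ∈ T, ∀ q ∈ P.1, P.2 < dist x q) ∨ (∃ q ∈ P.1, ∀ x ∈ T, P.2 < dist q x))) :
    ∃ γ : ℝ, 0 < γ ∧ ∀ P ∈ F,
      (∃ x ∈ T, ∀ q ∈ P.1, P.2 + γ ≤ dist x q) ∨ (∃ q ∈ P.1, ∀ x ∈ T, P.2 + γ ≤ dist q x) := by
  classical
  induction F using Finset.induction_on with
  | empty => exact ⟨1, one_pos, by simp⟩
  | @insert P F hP ih =>
    obtain ⟨γ1, hγ1, hF1⟩ := ih (fun Q hQ => hF Q (Finset.mem_insert_of_mem hQ))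
    obtain ⟨hPne, hPd⟩ := hF P (Finset.mem_insert_self P F)
    have : ∃ γ2 : ℝ, 0 < γ2 ∧
        ((∃ x ∈ T, ∀ q ∈ P.1, P.2 + γ2 ≤ dist x q) ∨
         (∃ q ∈ P.1, ∀ x ∈ T, P.2 + γ2 ≤ dist q x)) := by
      rcases hPd with ⟨x, hx, hxq⟩ | ⟨q, hq, hqx⟩
      · refine ⟨P.1.inf' hPne (fun q => dist x q) - P.2, ?_, Or.inl ⟨x, hx, ?_⟩⟩
        · rw [sub_pos, Finset.lt_inf'_iff]
          exact fun q hq => hxq q hq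
        · intro q hq
          have := Finset.inf'_le (fun q => dist x q) hq
          linarith
      · refine ⟨T.inf' hTne (fun x => dist q x) - P.2, ?_, Or.inr ⟨q, hq, ?_⟩⟩
        · rw [sub_pos, Finset.lt_inf'_iff]
          exact fun x hx => hqx x hx
        · intro x hx
          have := Finset.inf'_le (fun x => dist q x) hx
          linarith
    obtain ⟨γ2, hγ2, hP2⟩ := this
    refine ⟨min γ1 γ2, lt_min hγ1 hγ2, ?_⟩
    intro Q hQ
    have hmono : ∀ (γ γ' : ℝ), γ' ≤ γ →
        ((∃ x ∈ T, ∀ q ∈ Q.1, Q.2 + γ ≤ dist x q) ∨ (∃ q ∈ Q.1, ∀ x ∈ T, Q.2 + γ ≤ dist q x)) →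
        ((∃ x ∈ T, ∀ q ∈ Q.1, Q.2 + γ' ≤ dist x q) ∨
         (∃ q ∈ Q.1, ∀ x ∈ T, Q.2 + γ' ≤ dist q x)) := by
      rintro γ γ' hle (⟨x, hx, h⟩ | ⟨q, hq, h⟩)
      · exact Or.inl ⟨x, hx, fun q hq => le_trans (by linarith) (h q hq)⟩
      · exact Or.inr ⟨q, hq, fun x hx => le_trans (by linarith) (h x hx)⟩
    rcases Finset.mem_insert.mp hQ with rfl | hQ
    · exact hmono γ2 _ (min_le_right _ _) hP2
    · exact hmono γ1 _ (min_le_left _ _) (hF1 Q hQ)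

end Margins

section Ext
variable {X : Type*} [MetricSpace X] [Nonempty X] [CompleteSpace X]

set_option maxHeartbeats 2000000 in
lemma ext_exists
    (hperf : ∀ x : X, (nhdsWithin x {x}ᶜ).NeBot)
    {Ψ : ℕ → List ℕ} {n : ℕ} {a : ℕ → ℕ} {U : List ℕ → Set X} {b : ℕ → ℝ}
    (hπ : IsBalancedScheme Ψ n a U b)
    {D' : Set X} (hD'c : D'.Countable) (w0 : X)
    (T : Finset X)
    (hT1 : ∀ x ∈ T, ∃ l, (ValidIdx a l ∧ l.length = 2*n) ∧ x ∈ Rtop n U l)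
    (hT2 : ∀ l, ValidIdx a l → l.length = 2*n → ∃ x ∈ T, x ∈ Rtop n U l)
    {η : ℝ} (hη : 0 < η)
    (F : Finset (Finset X × ℝ))
    (hF : ∀ P ∈ F, 0 < P.2 ∧ P.1.Nonempty ∧
      ((∃ x ∈ T, ∀ q ∈ P.1, P.2 < dist x q) ∨ (∃ q ∈ P.1, ∀ x ∈ T, P.2 < dist q x))) :
    ∃ p : Pack Ψ n a U D' w0,
      (∀ c ∈ p.C, ∃ x ∈ T, dist c x ≤ η) ∧
      (∀ x ∈ T, ∃ c ∈ p.C, dist c x ≤ η) ∧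
      p.r ≤ η ∧
      (∀ P ∈ F, (∃ c ∈ p.C, ∀ q ∈ P.1, P.2 + p.r ≤ dist c q) ∨
                 (∃ q ∈ P.1, ∀ c ∈ p.C, P.2 + p.r ≤ dist q c)) := by
  classical
  obtain ⟨ha1, ha2, ha3, hU4, hU5, hb6, hd7, hs8, h9⟩ := id hπ
  -- basic facts about the top sets
  have hRopen : ∀ l, ValidIdx a l → l.length = 2*n → IsOpen (Rtop n U l) ∧ (Rtop n U l).Nonempty := by
    intro l hv hl
    by_cases hn : n = 0
    · simp [Rtop, hn]
    · have h1 : 1 ≤ l.length := by omega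
      have := hU4 l hv h1 (by omega)
      simp only [Rtop, if_neg hn]
      exact ⟨this.2, this.1⟩
  have hTne : T.Nonempty := by
    obtain ⟨l, hv, hl⟩ := vlen_nonempty (a := a) (m := 2*n) (fun k hk => ha1 k hk)
    obtain ⟨x, hx, -⟩ := hT2 l hv hl
    exact ⟨x, hx⟩
  -- branching numbers
  set A : ℕ := 2*n*(∏ i ∈ Finset.range (2*n), a i) + T.card + 2 with hA
  set B : ℕ := (2*n+1) * ((∏ i ∈ Finset.range (2*n), a i) * A) + 2 with hB
  set a' : ℕ → ℕ := fun k => if k < 2*n then a k else if k = 2*n then A else if k = 2*n+1 then B else 1 with ha'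
  have ha'lt : ∀ k, k < 2*n → a' k = a k := by intro k hk; simp [ha', hk]
  have ha'2n : a' (2*n) = A := by simp [ha']
  have ha'2n1 : a' (2*n+1) = B := by
    have : ¬ (2*n+1 < 2*n) := by omega
    have h2 : 2*n+1 ≠ 2*n := by omega
    simp [ha', this, h2]
  have hApos : 2 ≤ A := by omega
  have hBpos : 2 ≤ B := by omega
  have ha'pos : ∀ k, k < 2*n+2 → 1 ≤ a' k := by
    intro k hk
    rcases lt_trichotomy k (2*n) with h | h | h
    · rw [ha'lt k h]; exact ha1 k h
    · subst h; omega
    · have : k = 2*n+1 := by omega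
      subst this; omega
  have hvt : ∀ l : List ℕ, l.length ≤ 2*n → (ValidIdx a l ↔ ValidIdx a' l) := by
    intro l hl
    constructor
    · exact validIdx_congr (fun k hk => (ha'lt k (by omega)).symm)
    · exact validIdx_congr (fun k hk => ha'lt k (by omega))
  -- finite sets of valid tuples
  set V1fin : Finset (List ℕ) := (vlen_finite a' (2*n+1)).toFinset with hV1fin
  set V2fin : Finset (List ℕ) := (vlen_finite a' (2*n+2)).toFinset with hV2fin
  have hV1mem : ∀ l, l ∈ V1fin ↔ ValidIdx a' l ∧ l.length = 2*n+1 := by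
    intro l; rw [hV1fin, Set.Finite.mem_toFinset]; rfl
  have hV2mem : ∀ l, l ∈ V2fin ↔ ValidIdx a' l ∧ l.length = 2*n+2 := by
    intro l; rw [hV2fin, Set.Finite.mem_toFinset]; rfl
  have hV1drop : ∀ t ∈ V1fin, ValidIdx a t.dropLast ∧ t.dropLast.length = 2*n := by
    intro t ht
    obtain ⟨hv, hl⟩ := (hV1mem t).mp ht
    have h1 : t.dropLast.length = 2*n := by rw [List.length_dropLast]; omega
    refine ⟨?_, h1⟩
    rw [hvt _ (le_of_eq h1)]
    rw [List.dropLast_eq_take]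
    exact validIdx_take hv _
  have hV2drop : ∀ u ∈ V2fin, u.dropLast ∈ V1fin := by
    intro u hu
    obtain ⟨hv, hl⟩ := (hV2mem u).mp hu
    rw [hV1mem]
    constructor
    · rw [List.dropLast_eq_take]; exact validIdx_take hv _
    · rw [List.length_dropLast]; omega
  -- the anchors
  set anchor : List ℕ → X := fun t =>
    (T.filter (fun x => x ∈ Rtop n U t.dropLast)).toList.getD
      (min (t.getLastD 0) ((T.filter (fun x => x ∈ Rtop n U t.dropLast)).toList.length - 1)) w0
    with hanchor
  have hTRne : ∀ t ∈ V1fin, (T.filter (fun x => x ∈ Rtop n U t.dropLast)).toList ≠ [] := by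
    intro t ht
    obtain ⟨hv, hl⟩ := hV1drop t ht
    obtain ⟨x, hx, hxR⟩ := hT2 _ hv hl
    intro hte
    have : x ∈ (T.filter (fun x => x ∈ Rtop n U t.dropLast)).toList := by
      rw [Finset.mem_toList, Finset.mem_filter]
      exact ⟨hx, hxR⟩
    rw [hte] at this
    simp at this
  have hanchor_mem : ∀ t ∈ V1fin, anchor t ∈ T ∧ anchor t ∈ Rtop n U t.dropLast := by
    intro t ht
    set L := (T.filter (fun x => x ∈ Rtop n U t.dropLast)).toList with hL
    have hLne : L ≠ [] := hTRne t ht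
    have hlen : 0 < L.length := List.length_pos_iff.mpr hLne
    have hidx : min (t.getLastD 0) (L.length - 1) < L.length := by omega
    have hmem : anchor t ∈ L := by
      rw [hanchor]
      simp only [← hL]
      rw [List.getD_eq_getElem L w0 hidx]
      exact List.getElem_mem hidx
    rw [hL, Finset.mem_toList, Finset.mem_filter] at hmem
    exact ⟨hmem.1, hmem.2⟩
  have hanchor_surj : ∀ x ∈ T, ∃ t ∈ V1fin, anchor t = x := by
    intro x hx
    obtain ⟨l, ⟨hv, hl⟩, hxR⟩ := hT1 x hx
    set L := (T.filter (fun y => y ∈ Rtop n U l)).toList with hL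
    have hxL : x ∈ L := by
      rw [hL, Finset.mem_toList, Finset.mem_filter]
      exact ⟨hx, hxR⟩
    have hidx : L.idxOf x < L.length := List.idxOf_lt_length_iff.mpr hxL
    set s := L.idxOf x with hs
    have hsA : s < A := by
      have h1 : L.length = (T.filter (fun y => y ∈ Rtop n U l)).card := Finset.length_toList _
      have h2 : (T.filter (fun y => y ∈ Rtop n U l)).card ≤ T.card := Finset.card_filter_le _ _
      omega
    refine ⟨l ++ [s], ?_, ?_⟩
    · rw [hV1mem, validIdx_concat]
      refine ⟨⟨(hvt l (le_of_eq hl)).mp hv, ?_⟩, by simp [hl]⟩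
      rw [hl, ha'2n]
      exact hsA
    · simp only [hanchor]
      have hdrop : (l ++ [s]).dropLast = l := List.dropLast_concat
      have hglast : (l ++ [s]).getLastD 0 = s := List.getLastD_concat
      rw [hdrop, hglast, ← hL]
      have hmin : min s (L.length - 1) = s := by omega
      rw [hmin, List.getD_eq_getElem L w0 (by omega)]
      exact List.getElem_idxOf hidx
  -- radius of the anchor inside its top region
  have hrad : ∀ t ∈ V1fin, ∃ δ : ℝ, 0 < δ ∧ Metric.ball (anchor t) (2*δ) ⊆ Rtop n U t.dropLast := by
    intro t ht
    obtain ⟨hv, hl⟩ := hV1drop t ht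
    obtain ⟨hRo, -⟩ := hRopen _ hv hl
    obtain ⟨-, hmem⟩ := hanchor_mem t ht
    obtain ⟨ε, hε, hεsub⟩ := Metric.isOpen_iff.mp hRo _ hmem
    exact ⟨ε/2, by linarith, by
      intro z hz
      apply hεsub
      simp only [Metric.mem_ball] at hz ⊢
      linarith⟩
  set radR : List ℕ → ℝ := fun t => if h : t ∈ V1fin then (hrad t h).choose else 1 with hradR
  have hradR_pos : ∀ t ∈ V1fin, 0 < radR t := by
    intro t ht
    simp only [hradR, dif_pos ht]
    exact (hrad t ht).choose_spec.1
  have hradR_sub : ∀ t ∈ V1fin, Metric.ball (anchor t) (2 * radR t) ⊆ Rtop n U t.dropLast := by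
    intro t ht
    simp only [hradR, dif_pos ht]
    exact (hrad t ht).choose_spec.2
  -- margins for the escape conditions
  obtain ⟨γ, hγ, hγF⟩ := margins_exists T hTne F (fun P hP => ⟨(hF P hP).2.1, (hF P hP).2.2⟩)
  set η₀ : ℝ := min η γ with hη₀
  have hη₀pos : 0 < η₀ := lt_min hη hγ
  have hη₀η : η₀ ≤ η := min_le_left _ _
  have hη₀γ : η₀ ≤ γ := min_le_right _ _
  set μ : List ℕ → ℝ := fun t => min (η₀/8) (radR t) with hμ
  have hμpos : ∀ t ∈ V1fin, 0 < μ t := by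
    intro t ht
    exact lt_min (by linarith) (hradR_pos t ht)
  -- choose the parent centres
  have hV1ne : V1fin.Nonempty := by
    obtain ⟨l, hv, hl⟩ := vlen_nonempty (a := a') (m := 2*n+1) (fun k hk => ha'pos k (by omega))
    exact ⟨l, (hV1mem l).mpr ⟨hv, hl⟩⟩
  obtain ⟨pc, hpcInj, hpcMem⟩ := finset_choice_inj hperf V1fin
    (fun t => Metric.ball (anchor t) (μ t))
    (fun t ht => ⟨Metric.isOpen_ball, Metric.nonempty_ball.mpr (hμpos t ht)⟩)
    (hD'c.union (Set.countable_singleton w0))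
  have hpc_anchor : ∀ t ∈ V1fin, dist (pc t) (anchor t) < μ t := by
    intro t ht
    have := (hpcMem t ht).1
    simpa [Metric.mem_ball] using this
  have hpcD' : ∀ t ∈ V1fin, pc t ∉ D' ∧ pc t ≠ w0 := by
    intro t ht
    have := (hpcMem t ht).2
    simp only [Set.mem_union, Set.mem_singleton_iff, not_or] at this
    exact this
  -- minimal distance between parent centres
  have hV1two : ∃ t0 ∈ V1fin, ∃ t1 ∈ V1fin, t0 ≠ t1 := by
    have hrep : ValidIdx a' (List.replicate (2*n) 0) :=
      validIdx_replicate (fun k hk => ha'pos k (by omega))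
    have h0 : List.replicate (2*n) 0 ++ [0] ∈ V1fin := by
      rw [hV1mem, validIdx_concat]
      refine ⟨⟨hrep, ?_⟩, by simp⟩
      simp only [List.length_replicate, ha'2n]
      omega
    have h1 : List.replicate (2*n) 0 ++ [1] ∈ V1fin := by
      rw [hV1mem, validIdx_concat]
      refine ⟨⟨hrep, ?_⟩, by simp⟩
      simp only [List.length_replicate, ha'2n]
      omega
    refine ⟨_, h0, _, h1, ?_⟩
    intro hc
    have := congrArg List.getLast? hc
    rw [List.getLast?_concat, List.getLast?_concat] at this
    simp at this
  set P1 : Finset (List ℕ × List ℕ) := (V1fin ×ˢ V1fin).filter (fun p => p.1 ≠ p.2) with hP1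
  have hP1ne : P1.Nonempty := by
    obtain ⟨t0, h0, t1, h1, hne⟩ := hV1two
    exact ⟨(t0, t1), by rw [hP1, Finset.mem_filter, Finset.mem_product]; exact ⟨⟨h0, h1⟩, hne⟩⟩
  set s1 : ℝ := P1.inf' hP1ne (fun p => dist (pc p.1) (pc p.2)) with hs1
  have hs1pos : 0 < s1 := by
    rw [hs1, Finset.lt_inf'_iff]
    rintro ⟨t, t'⟩ hp
    rw [hP1, Finset.mem_filter, Finset.mem_product] at hp
    rw [dist_pos]
    intro hc
    exact hp.2 (hpcInj hp.1.1 hp.1.2 hc)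
  have hs1le : ∀ t ∈ V1fin, ∀ t' ∈ V1fin, t ≠ t' → s1 ≤ dist (pc t) (pc t') := by
    intro t ht t' ht' hne
    have hmem : (t, t') ∈ P1 := by
      rw [hP1, Finset.mem_filter, Finset.mem_product]; exact ⟨⟨ht, ht'⟩, hne⟩
    exact Finset.inf'_le _ hmem
  set minμ : ℝ := V1fin.inf' hV1ne μ with hminμ
  have hminμpos : 0 < minμ := by
    rw [hminμ, Finset.lt_inf'_iff]; exact hμpos
  set rp : ℝ := min (s1/8) minμ with hrp
  have hrppos : 0 < rp := lt_min (by linarith) hminμpos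
  have hrpμ : ∀ t ∈ V1fin, rp ≤ μ t := by
    intro t ht
    exact le_trans (min_le_right _ _) (Finset.inf'_le μ ht)
  have hrps1 : 8 * rp ≤ s1 := by
    have := min_le_left (s1/8) minμ
    rw [← hrp] at this
    linarith
  have hrpη : rp ≤ η₀/8 := by
    obtain ⟨t, ht⟩ := hV1ne
    have h1 : rp ≤ μ t := hrpμ t ht
    have h2 : μ t ≤ η₀/8 := min_le_left _ _
    linarith
  -- closed parent balls are inside the top regions
  have hpc_in : ∀ t ∈ V1fin, Metric.closedBall (pc t) rp ⊆ Rtop n U t.dropLast := by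
    intro t ht
    intro z hz
    apply hradR_sub t ht
    simp only [Metric.mem_closedBall] at hz
    have h1 := hpc_anchor t ht
    have h2 := hrpμ t ht
    have h3 : μ t ≤ radR t := min_le_right _ _
    simp only [Metric.mem_ball]
    calc dist z (anchor t) ≤ dist z (pc t) + dist (pc t) (anchor t) := dist_triangle _ _ _
      _ < rp + μ t := by linarith [hz]
      _ ≤ 2 * radR t := by linarith [hrpμ t ht]
  -- the distinguished tuple Φ
  set Φ : List ℕ := PhiIdx Ψ a' n with hΦdef
  have hΦ : 1 ≤ Φ.length ∧ Φ.length ≤ 2*n+1 ∧ ValidIdx a' Φ := by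
    rw [hΦdef, PhiIdx]
    split
    · next h => exact ⟨h.1, h.2.1, h.2.2⟩
    · next h =>
      refine ⟨by simp, by simp only [List.length_singleton]; omega, ?_⟩
      intro k hk
      simp only [List.length_singleton] at hk
      interval_cases k
      · have := ha'pos 0 (by omega)
        simpa [Nat.one_le_iff_ne_zero, Nat.pos_iff_ne_zero] using this
  -- children index sets
  set D1 : Finset (List ℕ) := V2fin.filter (fun u => Φ <+: u.dropLast) with hD1
  set D2 : Finset (List ℕ) := V2fin.filter (fun u => ¬ Φ <+: u.dropLast) with hD2
  have hchild_mem : ∀ t ∈ V1fin, ∀ s : ℕ, s < B → t ++ [s] ∈ V2fin := by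
    intro t ht s hs
    obtain ⟨hv, hl⟩ := (hV1mem t).mp ht
    rw [hV2mem, validIdx_concat]
    exact ⟨⟨hv, by rw [hl, ha'2n1]; exact hs⟩, by simp [hl]⟩
  have htstar : ∃ tst ∈ V1fin, Φ <+: tst := by
    refine ⟨Φ ++ List.replicate (2*n+1 - Φ.length) 0, ?_, List.prefix_append _ _⟩
    rw [hV1mem]
    constructor
    · exact validIdx_append_replicate hΦ.2.2 _ (fun k hk1 hk2 => ha'pos k (by omega))
    · simp
      omega
  have hD1two : ∃ u0 ∈ D1, ∃ u1 ∈ D1, u0 ≠ u1 := by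
    obtain ⟨tst, htst, hpre⟩ := htstar
    have h0 : tst ++ [0] ∈ D1 := by
      rw [hD1, Finset.mem_filter]
      exact ⟨hchild_mem tst htst 0 (by omega), by rw [List.dropLast_concat]; exact hpre⟩
    have h1 : tst ++ [1] ∈ D1 := by
      rw [hD1, Finset.mem_filter]
      exact ⟨hchild_mem tst htst 1 (by omega), by rw [List.dropLast_concat]; exact hpre⟩
    refine ⟨_, h0, _, h1, ?_⟩
    intro hc
    have := congrArg List.getLast? hc
    rw [List.getLast?_concat, List.getLast?_concat] at this
    simp at this
  have hD1ne : D1.Nonempty := by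
    obtain ⟨u0, h0, -⟩ := hD1two
    exact ⟨u0, h0⟩
  -- choose children of Φ-descendants
  obtain ⟨qc1, hqc1Inj, hqc1Mem⟩ := finset_choice_inj hperf D1
    (fun u => Metric.ball (pc u.dropLast) (rp/4))
    (fun u hu => ⟨Metric.isOpen_ball, Metric.nonempty_ball.mpr (by linarith)⟩)
    (hD'c.union (Set.countable_singleton w0))
  set PD : Finset (List ℕ × List ℕ) := (D1 ×ˢ D1).filter (fun p => p.1 ≠ p.2) with hPD
  have hPDne : PD.Nonempty := by
    obtain ⟨u0, h0, u1, h1, hne⟩ := hD1two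
    exact ⟨(u0, u1), by rw [hPD, Finset.mem_filter, Finset.mem_product]; exact ⟨⟨h0, h1⟩, hne⟩⟩
  set δ : ℝ := PD.inf' hPDne (fun p => dist (qc1 p.1) (qc1 p.2)) with hδ
  have hδpos : 0 < δ := by
    rw [hδ, Finset.lt_inf'_iff]
    rintro ⟨u, u'⟩ hp
    rw [hPD, Finset.mem_filter, Finset.mem_product] at hp
    rw [dist_pos]
    intro hc
    exact hp.2 (hqc1Inj hp.1.1 hp.1.2 hc)
  have hδle : ∀ u ∈ D1, ∀ u' ∈ D1, u ≠ u' → δ ≤ dist (qc1 u) (qc1 u') := by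
    intro u hu u' hu' hne
    have hmem : (u, u') ∈ PD := by
      rw [hPD, Finset.mem_filter, Finset.mem_product]; exact ⟨⟨hu, hu'⟩, hne⟩
    exact Finset.inf'_le _ hmem
  set cr2 : ℝ := min (rp/4) (δ/8) with hcr2
  have hcr2pos : 0 < cr2 := lt_min (by linarith) (by linarith)
  -- choose the remaining children
  obtain ⟨qc2, hqc2Inj, hqc2Mem⟩ := finset_choice_inj hperf D2
    (fun u => Metric.ball (pc u.dropLast) cr2)
    (fun u hu => ⟨Metric.isOpen_ball, Metric.nonempty_ball.mpr hcr2pos⟩)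
    ((hD'c.union (Set.countable_singleton w0)).union (D1.image qc1).countable_toSet)
  set qc : List ℕ → X := fun u => if Φ <+: u.dropLast then qc1 u else qc2 u with hqc
  have hqc_eq1 : ∀ u ∈ D1, qc u = qc1 u := by
    intro u hu
    rw [hD1, Finset.mem_filter] at hu
    simp only [hqc, if_pos hu.2]
  have hqc_eq2 : ∀ u ∈ D2, qc u = qc2 u := by
    intro u hu
    rw [hD2, Finset.mem_filter] at hu
    simp only [hqc, if_neg hu.2]
  have hV2split : ∀ u ∈ V2fin, u ∈ D1 ∨ u ∈ D2 := by
    intro u hu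
    by_cases h : Φ <+: u.dropLast
    · exact Or.inl (by rw [hD1, Finset.mem_filter]; exact ⟨hu, h⟩)
    · exact Or.inr (by rw [hD2, Finset.mem_filter]; exact ⟨hu, h⟩)
  have hqc_near : ∀ u ∈ V2fin, dist (qc u) (pc u.dropLast) < rp/4 ∧ qc u ∉ D' ∧ qc u ≠ w0 := by
    intro u hu
    rcases hV2split u hu with h | h
    · rw [hqc_eq1 u h]
      obtain ⟨hm, hz⟩ := hqc1Mem u h
      simp only [Set.mem_union, Set.mem_singleton_iff, not_or] at hz
      exact ⟨by simpa [Metric.mem_ball] using hm, hz.1, hz.2⟩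
    · rw [hqc_eq2 u h]
      obtain ⟨hm, hz⟩ := hqc2Mem u h
      simp only [Set.mem_union, Set.mem_singleton_iff, not_or] at hz
      refine ⟨?_, hz.1.1, hz.1.2⟩
      have : dist (qc2 u) (pc u.dropLast) < cr2 := by simpa [Metric.mem_ball] using hm
      have h4 : cr2 ≤ rp/4 := min_le_left _ _
      linarith
  have hqc_close2 : ∀ u ∈ D2, dist (qc u) (pc u.dropLast) < cr2 := by
    intro u hu
    rw [hqc_eq2 u hu]
    have := (hqc2Mem u hu).1
    simpa [Metric.mem_ball] using this
  have hqcInj : ∀ u ∈ V2fin, ∀ u' ∈ V2fin, qc u = qc u' → u = u' := by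
    intro u hu u' hu' heq
    rcases hV2split u hu with h | h <;> rcases hV2split u' hu' with h' | h'
    · exact hqc1Inj (by exact_mod_cast h) (by exact_mod_cast h') (by rw [← hqc_eq1 u h, ← hqc_eq1 u' h']; exact heq)
    · exfalso
      rw [hqc_eq1 u h, hqc_eq2 u' h'] at heq
      have := (hqc2Mem u' h').2
      apply this
      right
      rw [Finset.coe_image]
      exact ⟨u, by exact_mod_cast h, heq⟩
    · exfalso
      rw [hqc_eq2 u h, hqc_eq1 u' h'] at heq
      have := (hqc2Mem u h).2
      apply this
      right
      rw [Finset.coe_image]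
      exact ⟨u', by exact_mod_cast h', heq.symm⟩
    · exact hqc2Inj (by exact_mod_cast h) (by exact_mod_cast h') (by rw [← hqc_eq2 u h, ← hqc_eq2 u' h']; exact heq)
  -- minimal distance between child centres
  have hV2ne : V2fin.Nonempty := by
    obtain ⟨u0, h0, -⟩ := hD1two
    rw [hD1, Finset.mem_filter] at h0
    exact ⟨u0, h0.1⟩
  set P2 : Finset (List ℕ × List ℕ) := (V2fin ×ˢ V2fin).filter (fun p => p.1 ≠ p.2) with hP2
  have hP2ne : P2.Nonempty := by
    obtain ⟨u0, h0, u1, h1, hne⟩ := hD1two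
    rw [hD1, Finset.mem_filter] at h0 h1
    exact ⟨(u0, u1), by rw [hP2, Finset.mem_filter, Finset.mem_product]; exact ⟨⟨h0.1, h1.1⟩, hne⟩⟩
  set s2 : ℝ := P2.inf' hP2ne (fun p => dist (qc p.1) (qc p.2)) with hs2
  have hs2pos : 0 < s2 := by
    rw [hs2, Finset.lt_inf'_iff]
    rintro ⟨u, u'⟩ hp
    rw [hP2, Finset.mem_filter, Finset.mem_product] at hp
    rw [dist_pos]
    intro hc
    exact hp.2 (hqcInj _ hp.1.1 _ hp.1.2 hc)
  have hs2le : ∀ u ∈ V2fin, ∀ u' ∈ V2fin, u ≠ u' → s2 ≤ dist (qc u) (qc u') := by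
    intro u hu u' hu' hne
    have hmem : (u, u') ∈ P2 := by
      rw [hP2, Finset.mem_filter, Finset.mem_product]; exact ⟨⟨hu, hu'⟩, hne⟩
    exact Finset.inf'_le _ hmem
  -- the set of child centres
  set C : Finset X := V2fin.image qc with hC
  have hCne : C.Nonempty := hV2ne.image qc
  have hCmem : ∀ c, c ∈ C ↔ ∃ u ∈ V2fin, qc u = c := by
    intro c
    rw [hC, Finset.mem_image]
  set w0d : ℝ := C.inf' hCne (fun c => dist c w0) with hw0d
  have hw0dpos : 0 < w0d := by
    rw [hw0d, Finset.lt_inf'_iff]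
    intro c hc
    rw [dist_pos]
    obtain ⟨u, hu, rfl⟩ := (hCmem c).mp hc
    exact (hqc_near u hu).2.2
  -- choose the final radius
  have hbad : {e : ℝ | ∃ x ∈ D', ∃ c ∈ (C : Set X), e = dist x c}.Countable := by
    have : {e : ℝ | ∃ x ∈ D', ∃ c ∈ (C : Set X), e = dist x c} =
        Set.image2 dist D' (C : Set X) := by
      ext e
      simp [Set.mem_image2, eq_comm]
    rw [this]
    exact Set.Countable.image2 hD'c C.countable_toSet dist
  set m0 : ℝ := min (min (s2/8) (rp/4)) (min (δ/100) (min (γ/4) w0d)) with hm0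
  have hm0pos : 0 < m0 := by
    refine lt_min (lt_min (by linarith) (by linarith)) (lt_min (by linarith) (lt_min (by linarith) hw0dpos))
  obtain ⟨r0, hr0pos, hr0m0, hr0bad⟩ := exists_pos_avoid hbad hm0pos
  have hr0s2 : r0 ≤ s2/8 := le_trans hr0m0.le (le_trans (min_le_left _ _) (min_le_left _ _))
  have hr0rp : r0 ≤ rp/4 := le_trans hr0m0.le (le_trans (min_le_left _ _) (min_le_right _ _))
  have hr0δ : r0 ≤ δ/100 := le_trans hr0m0.le (le_trans (min_le_right _ _) (min_le_left _ _))
  have hr0γ : r0 ≤ γ/4 := le_trans hr0m0.le (le_trans (min_le_right _ _) (le_trans (min_le_right _ _) (min_le_left _ _)))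
  have hr0w0 : r0 < w0d := lt_of_lt_of_le hr0m0 (le_trans (min_le_right _ _) (le_trans (min_le_right _ _) (min_le_right _ _)))
  -- the new system of sets
  set b' : ℕ → ℝ := fun k => if k ≤ 2*n then b k else if k = 2*n+1 then 2*rp else 2*r0 with hb'
  set U' : List ℕ → Set X := fun l =>
    if l.length ≤ 2*n then U l
    else if l.length = 2*n+1 then Metric.ball (pc l) rp
    else if l.length = 2*n+2 then Metric.ball (qc l) r0
    else ∅ with hU'
  have hU'old : ∀ l : List ℕ, l.length ≤ 2*n → U' l = U l := by
    intro l hl; simp only [hU', if_pos hl]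
  have hU'par : ∀ l : List ℕ, l.length = 2*n+1 → U' l = Metric.ball (pc l) rp := by
    intro l hl
    have h1 : ¬ (l.length ≤ 2*n) := by omega
    simp only [hU', if_neg h1, if_pos hl]
  have hU'ch : ∀ l : List ℕ, l.length = 2*n+2 → U' l = Metric.ball (qc l) r0 := by
    intro l hl
    have h1 : ¬ (l.length ≤ 2*n) := by omega
    have h2 : ¬ (l.length = 2*n+1) := by omega
    simp only [hU', if_neg h1, if_neg h2, if_pos hl]
  have hb'old : ∀ k, k ≤ 2*n → b' k = b k := by
    intro k hk; simp only [hb', if_pos hk]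
  have hb'par : b' (2*n+1) = 2*rp := by
    have h1 : ¬ (2*n+1 ≤ 2*n) := by omega
    simp only [hb', if_neg h1]
    simp
  have hb'ch : b' (2*n+2) = 2*r0 := by
    have h1 : ¬ (2*n+2 ≤ 2*n) := by omega
    have h2 : ¬ (2*n+2 = 2*n+1) := by omega
    simp only [hb', if_neg h1, if_neg h2]
  -- parent balls are inside the corresponding old set, with the chain property
  have hchain : ∀ t ∈ V1fin, ∀ m, 1 ≤ m → m ≤ 2*n → U' t ⊆ U (t.take m) := by
    intro t ht m hm hm2
    obtain ⟨hvd, hld⟩ := hV1drop t ht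
    have hn : n ≠ 0 := by omega
    have hsub1 : U' t ⊆ Rtop n U t.dropLast := by
      rw [hU'par t ((hV1mem t).mp ht).2]
      exact (Metric.ball_subset_closedBall).trans (hpc_in t ht)
    have hsub2 : U t.dropLast ⊆ U (t.dropLast.take m) :=
      scheme_chain Ψ n a U b hπ (2*n - m) t.dropLast m (by omega) hvd hm (by omega)
    have htake : t.dropLast.take m = t.take m := by
      rw [List.dropLast_eq_take, List.take_take]
      congr 1
      have := ((hV1mem t).mp ht).2
      omega
    rw [Rtop, if_neg hn] at hsub1
    rw [← htake]
    exact hsub1.trans hsub2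
  -- descendants of Φ and the inclusion dichotomy
  have hdesc_sub : ∀ t ∈ V1fin, Φ <+: t → U' t ⊆ U' Φ := by
    intro t ht hpre
    obtain ⟨hΦ1, hΦ2, hΦ3⟩ := hΦ
    obtain ⟨hvt', hlt'⟩ := (hV1mem t).mp ht
    rcases Nat.lt_or_ge Φ.length (2*n+1) with hlen | hlen
    · -- Φ.length ≤ 2n : old set
      have hlen2 : Φ.length ≤ 2*n := by omega
      rw [hU'old Φ hlen2]
      have htake : t.take Φ.length = Φ := (List.prefix_iff_eq_take.mp hpre).symm
      rw [← htake]
      exact hchain t ht Φ.length hΦ1 hlen2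
    · -- Φ.length = 2n+1 : t = Φ
      have : Φ.length = 2*n+1 := by omega
      have := hpre.eq_of_length (by omega)
      rw [this]
  have hdesc_not : ∀ t ∈ V1fin, ¬ Φ <+: t → ¬ (U' t ⊆ U' Φ) := by
    intro t ht hnpre hsub
    obtain ⟨hΦ1, hΦ2, hΦ3⟩ := hΦ
    obtain ⟨hvt', hlt'⟩ := (hV1mem t).mp ht
    have hU't : U' t = Metric.ball (pc t) rp := hU'par t hlt'
    have hU'tne : (U' t).Nonempty := by
      rw [hU't]; exact Metric.nonempty_ball.mpr hrppos
    rcases Nat.lt_or_ge Φ.length (2*n+1) with hlen | hlen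
    · have hlen2 : Φ.length ≤ 2*n := by omega
      have hn : n ≠ 0 := by omega
      set Φ' : List ℕ := t.take Φ.length with hΦ'
      have hΦ'len : Φ'.length = Φ.length := by
        rw [hΦ', List.length_take]; omega
      have hΦ'ne : Φ' ≠ Φ := by
        intro hc
        refine hnpre (List.prefix_iff_eq_take.mpr ?_)
        rw [← hc, hΦ'len]
      have hΦ'val : ValidIdx a Φ' := by
        refine (hvt Φ' (by rw [hΦ'len]; omega)).mpr ?_
        rw [hΦ']
        exact validIdx_take hvt' _
      have hΦval : ValidIdx a Φ := (hvt _ (by omega)).mpr hΦ3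
      have hdisj : Disjoint (U Φ') (U Φ) := by
        apply disjoint_of_setDist_pos
        have := hs8 Φ' Φ hΦ'val hΦval (by omega) (by omega) (by omega) hΦ'ne
        have hbpos := hb6 Φ'.length (by omega) (by omega)
        linarith
      obtain ⟨z, hz⟩ := hU'tne
      have hz1 : z ∈ U Φ' := by
        rw [hΦ']
        exact hchain t ht Φ.length hΦ1 hlen2 hz
      have hz2 : z ∈ U Φ := by
        have := hsub hz
        rwa [hU'old Φ hlen2] at this
      exact Set.disjoint_left.mp hdisj hz1 hz2
    · have hΦlen : Φ.length = 2*n+1 := by omega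
      have hΦmem : Φ ∈ V1fin := (hV1mem Φ).mpr ⟨hΦ3, hΦlen⟩
      have htne : t ≠ Φ := by
        intro hc
        exact hnpre (by rw [hc])
      obtain ⟨z, hz⟩ := hU'tne
      have hz2 : z ∈ Metric.ball (pc Φ) rp := by
        have := hsub hz
        rwa [hU'par Φ hΦlen] at this
      rw [hU't] at hz
      have h1 : dist (pc t) (pc Φ) ≤ dist (pc t) z + dist z (pc Φ) := dist_triangle _ _ _
      have h2 : dist (pc t) z < rp := by rwa [Metric.mem_ball, dist_comm] at hz
      have h3 : dist z (pc Φ) < rp := by rwa [Metric.mem_ball] at hz2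
      have h4 := hs1le t ht Φ hΦmem htne
      linarith
  have hprod : ∏ i ∈ Finset.range (2*n), a' i = ∏ i ∈ Finset.range (2*n), a i :=
    Finset.prod_congr rfl (fun i hi => ha'lt i (Finset.mem_range.mp hi))
  -- the balanced scheme conditions
  have hscheme : IsBalancedScheme Ψ (n+1) a' U' b' := by
    refine ⟨?_, ?_, ?_, ?_, ?_, ?_, ?_, ?_, ?_⟩
    · intro k hk
      exact ha'pos k (by omega)
    · intro _
      by_cases hn0 : n = 0
      · have : a' 0 = A := by simp [ha', hn0]
        omega
      · have : a' 0 = a 0 := ha'lt 0 (by omega)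
        have := ha2 (by omega)
        omega
    · intro k hk1 hk2
      rcases lt_trichotomy k (2*n) with h | h | h
      · have hprodk : ∏ i ∈ Finset.range k, a' i = ∏ i ∈ Finset.range k, a i :=
          Finset.prod_congr rfl (fun i hi => ha'lt i (by have := Finset.mem_range.mp hi; omega))
        rw [hprodk, ha'lt k h]
        exact ha3 k hk1 h
      · subst h
        rw [hprod, ha'2n, hA]
        exact le_trans (Nat.le_add_right _ _) (Nat.le_add_right _ _)
      · have hk3 : k = 2*n+1 := by omega
        subst hk3
        rw [Finset.prod_range_succ, hprod, ha'2n, ha'2n1, hB]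
        exact Nat.le_add_right _ 2
    · intro l hv h1 h2
      by_cases hl1 : l.length ≤ 2*n
      · rw [hU'old l hl1]
        exact hU4 l ((hvt l hl1).mpr hv) h1 (by omega)
      · by_cases hl2 : l.length = 2*n+1
        · rw [hU'par l hl2]
          exact ⟨Metric.nonempty_ball.mpr hrppos, Metric.isOpen_ball⟩
        · have hl3 : l.length = 2*n+2 := by omega
          rw [hU'ch l hl3]
          exact ⟨Metric.nonempty_ball.mpr hr0pos, Metric.isOpen_ball⟩
    · intro l x hval h1 h2
      have hlen : (l ++ [x]).length = l.length + 1 := by simp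
      by_cases hc1 : l.length + 1 ≤ 2*n
      · rw [hU'old (l ++ [x]) (by omega), hU'old l (by omega)]
        exact hU5 l x ((hvt _ (by omega)).mpr hval) h1 (by omega)
      · by_cases hc2 : l.length = 2*n
        · have hn : n ≠ 0 := by omega
          have htV1 : (l ++ [x]) ∈ V1fin := (hV1mem _).mpr ⟨hval, by omega⟩
          rw [hU'par (l ++ [x]) (by omega), hU'old l (by omega)]
          have hsub := hpc_in _ htV1
          rw [List.dropLast_concat, Rtop, if_neg hn] at hsub
          exact (Metric.closure_ball_subset_closedBall).trans hsub
        · have hc3 : l.length = 2*n+1 := by omega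
          have huV2 : (l ++ [x]) ∈ V2fin := (hV2mem _).mpr ⟨hval, by omega⟩
          rw [hU'ch (l ++ [x]) (by omega), hU'par l hc3]
          refine Metric.closure_ball_subset_closedBall.trans ?_
          intro z hz
          rw [Metric.mem_closedBall] at hz
          have hq := (hqc_near _ huV2).1
          rw [List.dropLast_concat] at hq
          rw [Metric.mem_ball]
          calc dist z (pc l) ≤ dist z (qc (l ++ [x])) + dist (qc (l ++ [x])) (pc l) :=
                dist_triangle _ _ _
            _ < r0 + rp/4 := by linarith
            _ < rp := by linarith
    · intro k hk1 hk2
      by_cases h : k ≤ 2*n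
      · rw [hb'old k h]
        exact hb6 k hk1 h
      · by_cases h2 : k = 2*n+1
        · subst h2; rw [hb'par]; linarith
        · have : k = 2*n+2 := by omega
          subst this; rw [hb'ch]; linarith
    · intro l hv h1 h2
      by_cases hl1 : l.length ≤ 2*n
      · rw [hU'old l hl1, hb'old _ hl1]
        exact hd7 l ((hvt l hl1).mpr hv) h1 hl1
      · by_cases hl2 : l.length = 2*n+1
        · rw [hU'par l hl2, hl2, hb'par]
          exact Metric.diam_ball (le_of_lt hrppos)
        · have hl3 : l.length = 2*n+2 := by omega
          rw [hU'ch l hl3, hl3, hb'ch]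
          exact Metric.diam_ball (le_of_lt hr0pos)
    · intro l l' hv hv' h1 hlen h2 hne
      by_cases hl1 : l.length ≤ 2*n
      · rw [hU'old l hl1, hU'old l' (by omega), hb'old _ hl1]
        exact hs8 l l' ((hvt l hl1).mpr hv) ((hvt l' (by omega)).mpr hv') h1 hlen hl1 hne
      · by_cases hl2 : l.length = 2*n+1
        · have hmem : l ∈ V1fin := (hV1mem l).mpr ⟨hv, hl2⟩
          have hmem' : l' ∈ V1fin := (hV1mem l').mpr ⟨hv', by omega⟩
          rw [hU'par l hl2, hU'par l' (by omega), hl2, hb'par]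
          have hd := hs1le l hmem l' hmem' hne
          have hsd : s1 - 2*rp ≤ SetDist (Metric.ball (pc l) rp) (Metric.ball (pc l') rp) := by
            apply le_setDist (Metric.nonempty_ball.mpr hrppos) (Metric.nonempty_ball.mpr hrppos)
            intro x hx y hy
            rw [Metric.mem_ball] at hx hy
            have := dist_triangle (pc l) x (pc l')
            have := dist_triangle x y (pc l')
            have h5 : dist (pc l) (pc l') ≤ dist (pc l) x + dist x y + dist y (pc l') := by
              calc dist (pc l) (pc l') ≤ dist (pc l) x + dist x (pc l') := dist_triangle _ _ _
                _ ≤ dist (pc l) x + (dist x y + dist y (pc l')) := by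
                    linarith [dist_triangle x y (pc l')]
                _ = dist (pc l) x + dist x y + dist y (pc l') := by ring
            have hx' : dist (pc l) x < rp := by rw [dist_comm]; exact hx
            have hy' : dist y (pc l') < rp := hy
            linarith
          linarith
        · have hl3 : l.length = 2*n+2 := by omega
          have hmem : l ∈ V2fin := (hV2mem l).mpr ⟨hv, hl3⟩
          have hmem' : l' ∈ V2fin := (hV2mem l').mpr ⟨hv', by omega⟩
          rw [hU'ch l hl3, hU'ch l' (by omega), hl3, hb'ch]
          have hd := hs2le l hmem l' hmem' hne
          have hsd : s2 - 2*r0 ≤ SetDist (Metric.ball (qc l) r0) (Metric.ball (qc l') r0) := by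
            apply le_setDist (Metric.nonempty_ball.mpr hr0pos) (Metric.nonempty_ball.mpr hr0pos)
            intro x hx y hy
            rw [Metric.mem_ball] at hx hy
            have h5 : dist (qc l) (qc l') ≤ dist (qc l) x + dist x y + dist y (qc l') := by
              calc dist (qc l) (qc l') ≤ dist (qc l) x + dist x (qc l') := dist_triangle _ _ _
                _ ≤ dist (qc l) x + (dist x y + dist y (qc l')) := by
                    linarith [dist_triangle x y (qc l')]
                _ = dist (qc l) x + dist x y + dist y (qc l') := by ring
            have hx' : dist (qc l) x < r0 := by rw [dist_comm]; exact hx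
            linarith
          linarith
    · intro m i j hm hvi hvj hleni hlenj hsubi hnsubj s t hs ht hst
      rcases Nat.lt_or_ge m n with hmn | hmn
      · -- inherited from the scheme of size n
        have hΦcond : (1 ≤ (Ψ m).length ∧ (Ψ m).length ≤ 2*m+1 ∧ ValidIdx a' (Ψ m)) ↔
            (1 ≤ (Ψ m).length ∧ (Ψ m).length ≤ 2*m+1 ∧ ValidIdx a (Ψ m)) := by
          constructor
          · rintro ⟨h1, h2, h3⟩
            exact ⟨h1, h2, (hvt _ (by omega)).mpr h3⟩
          · rintro ⟨h1, h2, h3⟩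
            exact ⟨h1, h2, (hvt _ (by omega)).mp h3⟩
        have hΦeq : PhiIdx Ψ a' m = PhiIdx Ψ a m := by
          rw [PhiIdx, PhiIdx]
          exact if_congr hΦcond rfl rfl
        have hΦm : (PhiIdx Ψ a m).length ≤ 2*m+1 := by
          rw [PhiIdx]
          split
          · next h => exact h.2.1
          · next h =>
            simp only [List.length_singleton]
            omega
        have ha'm : a' (2*m+1) = a (2*m+1) := ha'lt _ (by omega)
        have hW : (⋃ u ∈ Finset.range (a' (2*m+1)), U' (j ++ [u])) =
            ⋃ u ∈ Finset.range (a (2*m+1)), U (j ++ [u]) := by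
          rw [ha'm]
          apply Set.iUnion₂_congr
          intro u hu
          exact hU'old _ (by simp; omega)
        have hsubi' : U i ⊆ U (PhiIdx Ψ a m) := by
          rw [← hU'old i (by omega), ← hU'old (PhiIdx Ψ a m) (by omega), ← hΦeq]
          exact hsubi
        have hnsubj' : ¬ U j ⊆ U (PhiIdx Ψ a m) := by
          rw [← hU'old j (by omega), ← hU'old (PhiIdx Ψ a m) (by omega), ← hΦeq]
          exact hnsubj
        rw [hW, hU'old (i ++ [s]) (by simp; omega), hU'old (i ++ [t]) (by simp; omega)]
        rw [ha'm] at hs ht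
        exact h9 m i j (by omega) ((hvt i (by omega)).mpr hvi) ((hvt j (by omega)).mpr hvj)
          hleni hlenj hsubi' hnsubj' s t hs ht hst
      · -- the new condition at level m = n
        have hmeq : m = n := by omega
        subst hmeq
        have hi : i ∈ V1fin := (hV1mem i).mpr ⟨hvi, hleni⟩
        have hj : j ∈ V1fin := (hV1mem j).mpr ⟨hvj, hlenj⟩
        rw [← hΦdef] at hsubi hnsubj
        have hdesci : Φ <+: i := by
          by_contra hnd
          exact hdesc_not i hi hnd hsubi
        have hndescj : ¬ Φ <+: j := fun hd => hnsubj (hdesc_sub j hj hd)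
        rw [ha'2n1] at hs ht ⊢
        have hchi : ∀ u, u < B → i ++ [u] ∈ D1 := by
          intro u hu
          rw [hD1, Finset.mem_filter]
          exact ⟨hchild_mem i hi u hu, by rw [List.dropLast_concat]; exact hdesci⟩
        have hchj : ∀ u, u < B → j ++ [u] ∈ D2 := by
          intro u hu
          rw [hD2, Finset.mem_filter]
          exact ⟨hchild_mem j hj u hu, by rw [List.dropLast_concat]; exact hndescj⟩
        have hne_st : i ++ [s] ≠ i ++ [t] := by
          intro hc
          have := congrArg List.getLast? hc
          rw [List.getLast?_concat, List.getLast?_concat] at this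
          simp only [Option.some.injEq] at this
          exact hst this
        have hqq : δ ≤ dist (qc (i ++ [s])) (qc (i ++ [t])) := by
          rw [hqc_eq1 _ (hchi s hs), hqc_eq1 _ (hchi t ht)]
          exact hδle _ (hchi s hs) _ (hchi t ht) hne_st
        have hRHS : δ - 2*r0 ≤ SetDist (U' (i ++ [s])) (U' (i ++ [t])) := by
          rw [hU'ch _ (by simp; omega), hU'ch _ (by simp; omega)]
          apply le_setDist (Metric.nonempty_ball.mpr hr0pos) (Metric.nonempty_ball.mpr hr0pos)
          intro x hx y hy
          rw [Metric.mem_ball] at hx hy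
          have h5 : dist (qc (i ++ [s])) (qc (i ++ [t])) ≤
              dist (qc (i ++ [s])) x + dist x y + dist y (qc (i ++ [t])) := by
            calc dist (qc (i ++ [s])) (qc (i ++ [t]))
                ≤ dist (qc (i ++ [s])) x + dist x (qc (i ++ [t])) := dist_triangle _ _ _
              _ ≤ dist (qc (i ++ [s])) x + (dist x y + dist y (qc (i ++ [t]))) := by
                  linarith [dist_triangle x y (qc (i ++ [t]))]
              _ = dist (qc (i ++ [s])) x + dist x y + dist y (qc (i ++ [t])) := by ring
          have hx' : dist (qc (i ++ [s])) x < r0 := by rw [dist_comm]; exact hx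
          linarith
        have hLHS : Metric.diam (⋃ u ∈ Finset.range B, U' (j ++ [u])) ≤ 2*(cr2 + r0) := by
          have hsub : (⋃ u ∈ Finset.range B, U' (j ++ [u])) ⊆ Metric.ball (pc j) (cr2 + r0) := by
            intro z hz
            obtain ⟨u, hu, hzu⟩ := Set.mem_iUnion₂.mp hz
            have hu' : u < B := Finset.mem_range.mp hu
            rw [hU'ch _ (by simp; omega)] at hzu
            have hclose := hqc_close2 _ (hchj u hu')
            rw [List.dropLast_concat] at hclose
            rw [Metric.mem_ball] at hzu ⊢
            calc dist z (pc j) ≤ dist z (qc (j ++ [u])) + dist (qc (j ++ [u])) (pc j) :=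
                  dist_triangle _ _ _
              _ < r0 + cr2 := by linarith
              _ = cr2 + r0 := by ring
          calc Metric.diam (⋃ u ∈ Finset.range B, U' (j ++ [u]))
              ≤ Metric.diam (Metric.ball (pc j) (cr2 + r0)) :=
                Metric.diam_mono hsub Metric.isBounded_ball
            _ ≤ 2*(cr2+r0) := Metric.diam_ball (by linarith)
        refine lt_of_le_of_lt hLHS (lt_of_lt_of_le ?_ hRHS)
        have hcr2δ : cr2 ≤ δ/8 := min_le_right _ _
        linarith
  have hconsist : SchemeConsistent n a a' U U' := by
    refine ⟨fun k hk => ha'lt k hk, ?_⟩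
    intro l hv h1 h2
    exact hU'old l h2
  have hc_nearT : ∀ u ∈ V2fin, anchor u.dropLast ∈ T ∧ dist (qc u) (anchor u.dropLast) ≤ η₀/4 := by
    intro u hu
    have hud := hV2drop u hu
    refine ⟨(hanchor_mem _ hud).1, ?_⟩
    have h1 := (hqc_near u hu).1
    have h2 := hpc_anchor _ hud
    have h3 : μ u.dropLast ≤ η₀/8 := min_le_left _ _
    have h4 : rp ≤ η₀/8 := hrpη
    calc dist (qc u) (anchor u.dropLast)
        ≤ dist (qc u) (pc u.dropLast) + dist (pc u.dropLast) (anchor u.dropLast) :=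
          dist_triangle _ _ _
      _ ≤ η₀/4 := by linarith
  have hcover : ∀ x ∈ T, ∃ u ∈ V2fin, dist (qc u) x ≤ η₀/4 := by
    intro x hx
    obtain ⟨t, htV, hta⟩ := hanchor_surj x hx
    have hu : t ++ [0] ∈ V2fin := hchild_mem t htV 0 (by omega)
    refine ⟨t ++ [0], hu, ?_⟩
    have h5 := (hc_nearT _ hu).2
    rw [List.dropLast_concat, hta] at h5
    exact h5
  refine ⟨{ a' := a', U' := U', b' := b', C := C, r := r0, scheme := hscheme,
            consist := hconsist, rpos := hr0pos, Cne := hCne,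
            ball_sub := ?_, ball_sur := ?_, generic := ?_, w0far := ?_ }, ?_, ?_, ?_, ?_⟩
  · intro l hv hl
    have hl' : l.length = 2*n+2 := by omega
    exact ⟨qc l, (hCmem _).mpr ⟨l, (hV2mem l).mpr ⟨hv, hl'⟩, rfl⟩, hU'ch l hl'⟩
  · intro c hc
    obtain ⟨u, hu, rfl⟩ := (hCmem c).mp hc
    obtain ⟨hv, hl⟩ := (hV2mem u).mp hu
    exact ⟨u, hv, by omega, hU'ch u hl⟩
  · intro x hxD c hc heq
    exact hr0bad ⟨x, hxD, c, by exact_mod_cast hc, heq.symm⟩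
  · intro c hc
    have : w0d ≤ dist c w0 := Finset.inf'_le (fun c => dist c w0) hc
    linarith
  · intro c hc
    obtain ⟨u, hu, rfl⟩ := (hCmem c).mp hc
    obtain ⟨hxT, hd⟩ := hc_nearT u hu
    exact ⟨anchor u.dropLast, hxT, by linarith⟩
  · intro x hx
    obtain ⟨u, hu, hd⟩ := hcover x hx
    exact ⟨qc u, (hCmem _).mpr ⟨u, hu, rfl⟩, by linarith⟩
  · show r0 ≤ η
    linarith [hrpη, hr0rp]
  · intro P hP
    rcases hγF P hP with ⟨x, hxT, hxq⟩ | ⟨q, hqP, hqx⟩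
    · left
      obtain ⟨u, huV, hux⟩ := hcover x hxT
      refine ⟨qc u, (hCmem _).mpr ⟨u, huV, rfl⟩, ?_⟩
      intro q hq
      have h1 := hxq q hq
      have h2 : dist x q ≤ dist x (qc u) + dist (qc u) q := dist_triangle _ _ _
      rw [dist_comm x (qc u)] at h2
      have h3 : η₀ ≤ γ := hη₀γ
      linarith
    · right
      refine ⟨q, hqP, ?_⟩
      intro c hc
      obtain ⟨u, hu, rfl⟩ := (hCmem c).mp hc
      obtain ⟨hxT, hd⟩ := hc_nearT u hu
      have h1 := hqx _ hxT
      have h2 : dist q (anchor u.dropLast) ≤ dist q (qc u) + dist (qc u) (anchor u.dropLast) :=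
        dist_triangle _ _ _
      have h3 : η₀ ≤ γ := hη₀γ
      linarith

end Ext

section Net
variable {X : Type*} [MetricSpace X]

lemma net_exists {Ψ : ℕ → List ℕ} {n : ℕ} {a : ℕ → ℕ} {U : List ℕ → Set X} {b : ℕ → ℝ}
    (hπ : IsBalancedScheme Ψ n a U b)
    {D' : Set X} (hD'd : Dense D') (K : NonemptyCompacts X) (hK : K ∈ SchemeSet a U n)
    {ε : ℝ} (hε : 0 < ε) :
    ∃ T : Finset X, (↑T ⊆ D') ∧
      (∀ x ∈ T, ∃ l, (ValidIdx a l ∧ l.length = 2*n) ∧ x ∈ Rtop n U l) ∧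
      (∀ l, ValidIdx a l → l.length = 2*n → ∃ x ∈ T, x ∈ Rtop n U l) ∧
      (∀ x ∈ (K : Set X), ∃ y ∈ T, dist x y ≤ ε) ∧
      (∀ y ∈ T, ∃ x ∈ (K : Set X), dist x y ≤ ε) := by
  classical
  have hRopen : ∀ l, ValidIdx a l → l.length = 2*n → IsOpen (Rtop n U l) ∧ (Rtop n U l).Nonempty := by
    intro l hv hl
    by_cases hn : n = 0
    · simp only [Rtop, if_pos hn]
      exact ⟨isOpen_univ, ⟨K.nonempty.some, Set.mem_univ _⟩⟩
    · have h1 : 1 ≤ l.length := by omega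
      have := hπ.2.2.2.1 l hv h1 (by omega)
      simp only [Rtop, if_neg hn]
      exact ⟨this.2, this.1⟩
  have hKcov : ∀ x ∈ (K : Set X), ∃ l, (ValidIdx a l ∧ l.length = 2*n) ∧ x ∈ Rtop n U l := by
    intro x hx
    by_cases hn : n = 0
    · refine ⟨[], ⟨validIdx_nil, by simp [hn]⟩, ?_⟩
      simp [Rtop, hn]
    · have := ((mem_schemeSet_of_ne hn K).mp hK).1 hx
      obtain ⟨l, hl, hxl⟩ := Set.mem_iUnion₂.mp this
      refine ⟨l, hl, ?_⟩
      simpa [Rtop, hn] using hxl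
  have hKmeet : ∀ l, ValidIdx a l → l.length = 2*n → ((K : Set X) ∩ Rtop n U l).Nonempty := by
    intro l hv hl
    by_cases hn : n = 0
    · simpa [Rtop, hn] using K.nonempty
    · have := ((mem_schemeSet_of_ne hn K).mp hK).2 l hv hl
      simpa [Rtop, hn] using this
  -- an adapted cover of K
  set ι : Type _ := {p : X × List ℕ //
    p.1 ∈ D' ∧ (ValidIdx a p.2 ∧ p.2.length = 2*n) ∧ p.1 ∈ Rtop n U p.2} with hι
  set W : ι → Set X := fun p => Metric.ball p.1.1 ε ∩ Rtop n U p.1.2 with hW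
  have hWopen : ∀ p : ι, IsOpen (W p) := by
    intro p
    exact (Metric.isOpen_ball).inter (hRopen _ p.2.2.1.1 p.2.2.1.2).1
  have hWcov : (K : Set X) ⊆ ⋃ p : ι, W p := by
    intro x hx
    obtain ⟨l, ⟨hv, hl⟩, hxR⟩ := hKcov x hx
    obtain ⟨δ, hδ, hδsub⟩ := Metric.isOpen_iff.mp (hRopen l hv hl).1 x hxR
    have hne : (Metric.ball x (min δ ε)).Nonempty :=
      Metric.nonempty_ball.mpr (lt_min hδ hε)
    obtain ⟨y, hyD, hyb⟩ := hD'd.exists_mem_open Metric.isOpen_ball hne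
    have hyR : y ∈ Rtop n U l := hδsub (by
      rw [Metric.mem_ball] at hyb ⊢
      exact lt_of_lt_of_le hyb (min_le_left _ _))
    refine Set.mem_iUnion.mpr ⟨⟨(y, l), hyD, ⟨hv, hl⟩, hyR⟩, ?_⟩
    constructor
    · rw [Metric.mem_ball]
      rw [Metric.mem_ball] at hyb
      rw [dist_comm]
      exact lt_of_lt_of_le hyb (min_le_right _ _)
    · exact hxR
  obtain ⟨tf, htf⟩ := K.isCompact.elim_finite_subcover W hWopen hWcov
  set T0 : Finset X := (tf.filter (fun p => (W p ∩ (K : Set X)).Nonempty)).image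
    (fun p => p.1.1) with hT0
  set Vfin : Finset (List ℕ) := (vlen_finite a (2*n)).toFinset with hVfin
  have hVmem : ∀ l, l ∈ Vfin ↔ ValidIdx a l ∧ l.length = 2*n := by
    intro l; rw [hVfin, Set.Finite.mem_toFinset]; rfl
  have hpick : ∀ l ∈ Vfin, ∃ y, (y ∈ D' ∧ y ∈ Rtop n U l) ∧ ∃ x ∈ (K : Set X), dist x y ≤ ε := by
    intro l hl
    obtain ⟨hv, hlen⟩ := (hVmem l).mp hl
    obtain ⟨x, hxK, hxR⟩ := hKmeet l hv hlen
    obtain ⟨δ, hδ, hδsub⟩ := Metric.isOpen_iff.mp (hRopen l hv hlen).1 x hxR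
    have hne : (Metric.ball x (min δ ε)).Nonempty :=
      Metric.nonempty_ball.mpr (lt_min hδ hε)
    obtain ⟨y, hyD, hyb⟩ := hD'd.exists_mem_open Metric.isOpen_ball hne
    rw [Metric.mem_ball] at hyb
    refine ⟨y, ⟨hyD, hδsub (by rw [Metric.mem_ball]; exact lt_of_lt_of_le hyb (min_le_left _ _))⟩,
      x, hxK, ?_⟩
    rw [dist_comm]
    exact le_of_lt (lt_of_lt_of_le hyb (min_le_right _ _))
  set T1 : Finset X := Vfin.attach.image (fun l => (hpick l.1 l.2).choose) with hT1
  refine ⟨T0 ∪ T1, ?_, ?_, ?_, ?_, ?_⟩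
  · intro y hy
    rw [Finset.coe_union, Set.mem_union] at hy
    rcases hy with hy | hy
    · rw [hT0] at hy
      simp only [Finset.coe_image, Set.mem_image, Finset.mem_coe, Finset.mem_filter] at hy
      obtain ⟨p, hp, rfl⟩ := hy
      exact p.2.1
    · rw [hT1] at hy
      simp only [Finset.coe_image, Set.mem_image, Finset.mem_coe, Finset.mem_attach] at hy
      obtain ⟨l, -, rfl⟩ := hy
      exact (hpick l.1 l.2).choose_spec.1.1
  · intro y hy
    rcases Finset.mem_union.mp hy with hy | hy
    · rw [hT0] at hy
      obtain ⟨p, hp, rfl⟩ := Finset.mem_image.mp hy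
      exact ⟨p.1.2, p.2.2.1, p.2.2.2⟩
    · rw [hT1] at hy
      obtain ⟨l, -, rfl⟩ := Finset.mem_image.mp hy
      exact ⟨l.1, (hVmem l.1).mp l.2, (hpick l.1 l.2).choose_spec.1.2⟩
  · intro l hv hl
    have hmem : l ∈ Vfin := (hVmem l).mpr ⟨hv, hl⟩
    refine ⟨(hpick l hmem).choose, ?_, (hpick l hmem).choose_spec.1.2⟩
    apply Finset.mem_union_right
    rw [hT1]
    exact Finset.mem_image.mpr ⟨⟨l, hmem⟩, Finset.mem_attach _ _, rfl⟩
  · intro x hx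
    obtain ⟨p, hp, hxp⟩ := Set.mem_iUnion₂.mp (htf hx)
    refine ⟨p.1.1, ?_, ?_⟩
    · apply Finset.mem_union_left
      rw [hT0]
      exact Finset.mem_image.mpr ⟨p, Finset.mem_filter.mpr ⟨hp, ⟨x, hxp, hx⟩⟩, rfl⟩
    · have : x ∈ Metric.ball p.1.1 ε := hxp.1
      rw [Metric.mem_ball] at this
      exact le_of_lt this
  · intro y hy
    rcases Finset.mem_union.mp hy with hy | hy
    · rw [hT0] at hy
      obtain ⟨p, hp, rfl⟩ := Finset.mem_image.mp hy
      obtain ⟨z, hz1, hz2⟩ := (Finset.mem_filter.mp hp).2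
      refine ⟨z, hz2, ?_⟩
      have : z ∈ Metric.ball p.1.1 ε := hz1.1
      rw [Metric.mem_ball] at this
      exact le_of_lt this
    · rw [hT1] at hy
      obtain ⟨l, -, rfl⟩ := Finset.mem_image.mp hy
      exact (hpick l.1 l.2).choose_spec.2

end Net

noncomputable def seqAux {P : Type*} (R : List P → P → Prop) (hstep : ∀ l : List P, ∃ p, R l p) :
    ℕ → List P
  | 0 => []
  | (j+1) => seqAux R hstep j ++ [Classical.choose (hstep (seqAux R hstep j))]

noncomputable def seqFn {P : Type*} (R : List P → P → Prop) (hstep : ∀ l : List P, ∃ p, R l p)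
    (j : ℕ) : P :=
  Classical.choose (hstep (seqAux R hstep j))

lemma seqAux_eq {P : Type*} (R : List P → P → Prop) (hstep : ∀ l : List P, ∃ p, R l p) :
    ∀ j, seqAux R hstep j = (List.range j).map (seqFn R hstep) := by
  intro j
  induction j with
  | zero => rfl
  | succ j ih =>
    rw [seqAux, List.range_succ, List.map_append, ← ih]
    rfl

lemma seqFn_spec {P : Type*} (R : List P → P → Prop) (hstep : ∀ l : List P, ∃ p, R l p)
    (j : ℕ) : R ((List.range j).map (seqFn R hstep)) (seqFn R hstep j) := by
  rw [← seqAux_eq]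
  exact Classical.choose_spec (hstep (seqAux R hstep j))

def Passes {X : Type*} [MetricSpace X] {Ψ : ℕ → List ℕ} {n : ℕ} {a : ℕ → ℕ}
    {U : List ℕ → Set X} {D' : Set X} {w0 : X}
    (T : Finset X) (q : Pack Ψ n a U D' w0) : Prop :=
  (∃ x ∈ T, ∀ c ∈ q.C, q.r < dist x c) ∨ (∃ c ∈ q.C, ∀ x ∈ T, q.r < dist c x)

end BSD

open BSD

/-- Lemma: in a non-empty perfect Polish space, for every balanced scheme `π` of size `n`
there are balanced schemes `π_j` (`j ∈ ℕ`) of size `n+1`, each consistent with `π`, with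
pairwise disjoint sets `𝒰(π_j)` whose union is dense in `𝒰(π)`. -/
theorem balanced_scheme_disjoint_dense_refinements
    {X : Type*} [MetricSpace X] [Nonempty X] [CompleteSpace X] [SeparableSpace X]
    (hperf : ∀ x : X, (nhdsWithin x {x}ᶜ).NeBot)
    (Ψ : ℕ → List ℕ) (hΨsurj : ∀ l : List ℕ, ∃ m, Ψ m = l)
    (hΨlen : ∀ m, (Ψ m).length ≤ 2 * m + 1)
    (n : ℕ) (a : ℕ → ℕ) (U : List ℕ → Set X) (b : ℕ → ℝ)
    (hπ : IsBalancedScheme Ψ n a U b) :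
    ∃ (a' : ℕ → ℕ → ℕ) (U' : ℕ → List ℕ → Set X) (b' : ℕ → ℕ → ℝ),
      (∀ j, IsBalancedScheme Ψ (n + 1) (a' j) (U' j) (b' j)) ∧
      (∀ j, SchemeConsistent n a (a' j) U (U' j)) ∧
      (Pairwise fun j j' => Disjoint (SchemeSet (a' j) (U' j) (n + 1))
        (SchemeSet (a' j') (U' j') (n + 1))) ∧
      SchemeSet a U n ⊆ closure (⋃ j : ℕ, SchemeSet (a' j) (U' j) (n + 1)) := by
  classical
  obtain ⟨D', hD'c, hD'd⟩ := exists_countable_dense X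
  have hRopen : ∀ l, ValidIdx a l → l.length = 2*n →
      IsOpen (Rtop n U l) ∧ (Rtop n U l).Nonempty := by
    intro l hv hl
    by_cases hn : n = 0
    · simp only [Rtop, if_pos hn]
      exact ⟨isOpen_univ, Set.univ_nonempty⟩
    · have h1 : 1 ≤ l.length := by omega
      have := hπ.2.2.2.1 l hv h1 (by omega)
      simp only [Rtop, if_neg hn]
      exact ⟨this.2, this.1⟩
  set Vfin : Finset (List ℕ) := (vlen_finite a (2*n)).toFinset with hVfin
  have hVmem : ∀ l, l ∈ Vfin ↔ ValidIdx a l ∧ l.length = 2*n := by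
    intro l; rw [hVfin, Set.Finite.mem_toFinset]; rfl
  have hpickH : ∀ l ∈ Vfin, ∃ y, y ∈ D' ∧ y ∈ Rtop n U l := by
    intro l hl
    obtain ⟨hv, hlen⟩ := (hVmem l).mp hl
    obtain ⟨hop, hne⟩ := hRopen l hv hlen
    exact hD'd.exists_mem_open hop hne
  set H : Finset X := Vfin.attach.image (fun l => (hpickH l.1 l.2).choose) with hH
  have hl₀ : List.replicate (2*n) 0 ∈ Vfin :=
    (hVmem _).mpr ⟨validIdx_replicate (fun k hk => hπ.1 k hk), by simp⟩
  set w0 : X := (hpickH _ hl₀).choose with hw0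
  have hw0H : w0 ∈ H := by
    rw [hH]
    exact Finset.mem_image.mpr ⟨⟨_, hl₀⟩, Finset.mem_attach _ _, rfl⟩
  have hHD : ↑H ⊆ D' := by
    intro y hy
    rw [hH] at hy
    simp only [Finset.coe_image, Set.mem_image, Finset.mem_coe, Finset.mem_attach] at hy
    obtain ⟨l, -, rfl⟩ := hy
    exact (hpickH l.1 l.2).choose_spec.1
  have hH1 : ∀ x ∈ H, ∃ l, (ValidIdx a l ∧ l.length = 2*n) ∧ x ∈ Rtop n U l := by
    intro x hx
    rw [hH] at hx
    obtain ⟨l, -, rfl⟩ := Finset.mem_image.mp hx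
    exact ⟨l.1, (hVmem l.1).mp l.2, (hpickH l.1 l.2).choose_spec.2⟩
  have hH2 : ∀ l, ValidIdx a l → l.length = 2*n → ∃ x ∈ H, x ∈ Rtop n U l := by
    intro l hv hl
    have hm : l ∈ Vfin := (hVmem l).mpr ⟨hv, hl⟩
    refine ⟨(hpickH l hm).choose, ?_, (hpickH l hm).choose_spec.2⟩
    rw [hH]
    exact Finset.mem_image.mpr ⟨⟨l, hm⟩, Finset.mem_attach _ _, rfl⟩
  set S : Set (Finset X) := {T | ↑T ⊆ D' ∧
    (∀ x ∈ T, ∃ l, (ValidIdx a l ∧ l.length = 2*n) ∧ x ∈ Rtop n U l) ∧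
    (∀ l, ValidIdx a l → l.length = 2*n → ∃ x ∈ T, x ∈ Rtop n U l)} with hS
  have hHS : H ∈ S := by rw [hS]; exact ⟨hHD, hH1, hH2⟩
  have hScnt : S.Countable := by
    have h0 : {s : Set X | s.Finite ∧ s ⊆ D'}.Countable := Set.countable_setOf_finite_subset hD'c
    have h1 : ((fun T : Finset X => (↑T : Set X)) ⁻¹' {s | s.Finite ∧ s ⊆ D'}).Countable :=
      h0.preimage Finset.coe_injective
    apply Set.Countable.mono _ h1
    intro T hT
    rw [hS] at hT
    exact ⟨T.finite_toSet, hT.1⟩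
  obtain ⟨f0, hf0⟩ := hScnt.exists_eq_range ⟨H, hHS⟩
  have hf0S : ∀ i, f0 i ∈ S := by
    intro i
    rw [hf0]
    exact ⟨i, rfl⟩
  set e : ℕ → Finset X × ℕ := fun m => (f0 (Nat.unpair m).1, (Nat.unpair m).2) with he
  have heS : ∀ m, (e m).1 ∈ S := fun m => hf0S _
  set Rrel : List (Pack Ψ n a U D' w0) → Pack Ψ n a U D' w0 → Prop := fun l p =>
    (∀ q ∈ l, ((∃ c ∈ p.C, ∀ c' ∈ q.C, q.r + p.r ≤ dist c c') ∨
               (∃ c' ∈ q.C, ∀ c ∈ p.C, q.r + p.r ≤ dist c' c))) ∧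
    ((∀ q ∈ l, Passes (e l.length).1 q) →
      ((∀ c ∈ p.C, ∃ x ∈ (e l.length).1, dist c x ≤ (2⁻¹:ℝ)^((e l.length).2)) ∧
       (∀ x ∈ (e l.length).1, ∃ c ∈ p.C, dist c x ≤ (2⁻¹:ℝ)^((e l.length).2)))) with hRrel
  have hstep : ∀ l, ∃ p, Rrel l p := by
    intro l
    set F : Finset (Finset X × ℝ) := (l.map (fun q => (q.C, q.r))).toFinset with hF
    have hFmem : ∀ P ∈ F, ∃ q ∈ l, (q.C, q.r) = P := by
      intro P hP
      rw [hF, List.mem_toFinset] at hP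
      exact List.mem_map.mp hP
    have hFmem' : ∀ q ∈ l, (q.C, q.r) ∈ F := by
      intro q hq
      rw [hF, List.mem_toFinset]
      exact List.mem_map.mpr ⟨q, hq, rfl⟩
    by_cases hp : ∀ q ∈ l, Passes (e l.length).1 q
    · have hTS := heS l.length
      rw [hS] at hTS
      obtain ⟨hTD, hT1, hT2⟩ := hTS
      have hη : (0:ℝ) < (2⁻¹:ℝ)^((e l.length).2) := by positivity
      obtain ⟨p, hp1, hp2, hp3, hp4⟩ := ext_exists hperf hπ hD'c w0 (e l.length).1 hT1 hT2 hη F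
        (by
          intro P hP
          obtain ⟨q, hq, hPq⟩ := hFmem P hP
          rw [← hPq]
          exact ⟨q.rpos, q.Cne, hp q hq⟩)
      refine ⟨p, ?_, ?_⟩
      · intro q hq
        exact hp4 (q.C, q.r) (hFmem' q hq)
      · intro _
        exact ⟨hp1, hp2⟩
    · obtain ⟨p, hp1, hp2, hp3, hp4⟩ := ext_exists hperf hπ hD'c w0 H hH1 hH2 one_pos F
        (by
          intro P hP
          obtain ⟨q, hq, hPq⟩ := hFmem P hP
          rw [← hPq]
          refine ⟨q.rpos, q.Cne, Or.inl ⟨w0, hw0H, ?_⟩⟩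
          intro c hc
          rw [dist_comm]
          exact q.w0far c hc)
      refine ⟨p, ?_, fun hcon => absurd hcon hp⟩
      intro q hq
      exact hp4 (q.C, q.r) (hFmem' q hq)
  set f : ℕ → Pack Ψ n a U D' w0 := seqFn Rrel hstep with hfdef
  have hf : ∀ j, Rrel ((List.range j).map f) (f j) := fun j => seqFn_spec Rrel hstep j
  have hesc : ∀ i j, i < j →
      ((∃ c ∈ (f j).C, ∀ c' ∈ (f i).C, (f i).r + (f j).r ≤ dist c c') ∨
       (∃ c' ∈ (f i).C, ∀ c ∈ (f j).C, (f i).r + (f j).r ≤ dist c' c)) := by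
    intro i j hij
    have hmem : f i ∈ (List.range j).map f :=
      List.mem_map.mpr ⟨i, List.mem_range.mpr hij, rfl⟩
    exact (hf j).1 (f i) hmem
  refine ⟨fun j => (f j).a', fun j => (f j).U', fun j => (f j).b',
    fun j => (f j).scheme, fun j => (f j).consist, ?_, ?_⟩
  · intro i j hne
    rcases hne.lt_or_gt with hij | hij
    · exact (pack_disjoint (f j) (f i) (hesc i j hij)).symm
    · exact pack_disjoint (f i) (f j) (hesc j i hij)
  · intro K hK
    rw [Metric.mem_closure_iff]
    intro ε hε
    obtain ⟨T, hTD, hT1, hT2, hKT, hTK⟩ :=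
      net_exists hπ hD'd K hK (show (0:ℝ) < ε/4 by linarith)
    have hTne : T.Nonempty := by
      obtain ⟨x, hx, -⟩ := hT2 (List.replicate (2*n) 0)
        (validIdx_replicate (fun k hk => hπ.1 k hk)) (by simp)
      exact ⟨x, hx⟩
    have hTS : T ∈ S := by rw [hS]; exact ⟨hTD, hT1, hT2⟩
    obtain ⟨i0, hi0⟩ : ∃ i0, f0 i0 = T := by
      have : T ∈ Set.range f0 := by rw [← hf0]; exact hTS
      exact this
    obtain ⟨k, hk⟩ := exists_pow_lt_of_lt_one (show (0:ℝ) < ε/4 by linarith)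
      (show (2⁻¹:ℝ) < 1 by norm_num)
    set m := Nat.pair i0 k with hm
    have hem : e m = (T, k) := by
      rw [he]
      simp only [hm, Nat.unpair_pair, hi0]
    have hlen : ((List.range m).map f).length = m := by simp
    have hc : e (((List.range m).map f).length) = (T, k) := by rw [hlen, hem]
    set T' : NonemptyCompacts X := ⟨⟨(↑T : Set X), T.finite_toSet.isCompact⟩,
      by simpa using hTne⟩ with hT'
    have hdistKT' : dist K T' ≤ ε/4 := by
      rw [Metric.NonemptyCompacts.dist_eq]
      apply Metric.hausdorffDist_le_of_mem_dist (by linarith)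
      · intro x hx
        obtain ⟨y, hy, hd⟩ := hKT x hx
        exact ⟨y, hy, hd⟩
      · intro y hy
        obtain ⟨x, hx, hd⟩ := hTK y hy
        exact ⟨x, hx, by rw [dist_comm]; exact hd⟩
    by_cases hpass : ∀ q ∈ (List.range m).map f, Passes T q
    · have hserve := (hf m).2 (by rw [hc]; exact hpass)
      rw [hc] at hserve
      obtain ⟨hs1, hs2⟩ := hserve
      set p := f m with hp
      set K' : NonemptyCompacts X := ⟨⟨(↑p.C : Set X), p.C.finite_toSet.isCompact⟩,
        by simpa using p.Cne⟩ with hK'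
      have hK'mem : K' ∈ SchemeSet p.a' p.U' (n+1) := by
        rw [pack_mem_iff]
        constructor
        · intro x hx
          have hx' : x ∈ p.C := hx
          exact Set.mem_iUnion₂.mpr ⟨x, hx', Metric.mem_ball_self p.rpos⟩
        · intro c hcm
          exact ⟨c, hcm, Metric.mem_ball_self p.rpos⟩
      have hdistT'K' : dist T' K' ≤ (2⁻¹:ℝ)^k := by
        rw [Metric.NonemptyCompacts.dist_eq]
        apply Metric.hausdorffDist_le_of_mem_dist (by positivity)
        · intro x hx
          obtain ⟨c, hcm, hd⟩ := hs2 x hx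
          exact ⟨c, hcm, by rw [dist_comm]; exact hd⟩
        · intro c hcm
          obtain ⟨x, hx, hd⟩ := hs1 c hcm
          exact ⟨x, hx, hd⟩
      refine ⟨K', Set.mem_iUnion.mpr ⟨m, hK'mem⟩, ?_⟩
      have htri := dist_triangle K T' K'
      have : (2⁻¹:ℝ)^k < ε/4 := hk
      calc dist K K' ≤ dist K T' + dist T' K' := htri
        _ ≤ ε/4 + (2⁻¹:ℝ)^k := by linarith
        _ < ε := by linarith
    · push_neg at hpass
      obtain ⟨q, hqmem, hnq⟩ := hpass
      obtain ⟨i, hi, rfl⟩ := List.mem_map.mp hqmem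
      rw [Passes] at hnq
      push_neg at hnq
      obtain ⟨hg1, hg2⟩ := hnq
      have hmemTi : T' ∈ SchemeSet (f i).a' (f i).U' (n+1) := by
        rw [pack_mem_iff]
        constructor
        · intro x hx
          have hx' : x ∈ T := hx
          obtain ⟨c, hcm, hd⟩ := hg1 x hx'
          have hne : dist x c ≠ (f i).r := (f i).generic x (hTD hx') c hcm
          exact Set.mem_iUnion₂.mpr ⟨c, hcm, by
            rw [Metric.mem_ball]
            exact lt_of_le_of_ne hd hne⟩
        · intro c hcm
          obtain ⟨x, hx, hd⟩ := hg2 c hcm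
          have hne : dist x c ≠ (f i).r := (f i).generic x (hTD hx) c hcm
          refine ⟨x, hx, ?_⟩
          rw [Metric.mem_ball, dist_comm] at *
          rw [dist_comm] at hd
          exact lt_of_le_of_ne hd hne
      refine ⟨T', Set.mem_iUnion.mpr ⟨i, hmemTi⟩, by linarith⟩
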